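/- arXiv:1711.09341 — 5 statements merged into one kernel-verified Lean document; each statement's English description precedes it below -/
import Mathlib

section
/- Let f be a circuit injection from a 2-connected graph G onto a graph G', and let S = S(v) be the star of a vertex v of G' such that f^{-1}(S) is an independent set of edges of G. Then G − f^{-1}(S) (delete the edges of f^{-1}(S), keep all vertices) has exactly two connected components G₁ and G₂, and every edge of f^{-1}(S) has one endpoint in G₁ and one endpoint in G₂. -/
open SimpleGraph

universe u v

/-- A circuit of `G` is the edge set of a cycle of `G`. -/
def IsCircuit {V : Type u} (G : SimpleGraph V) (C : Set (Sym2 V)) : Prop :=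
  ∃ (x : V) (w : G.Walk x x), w.IsCycle ∧ C = {e | e ∈ w.edges}

/-- The set of vertices covered by a set of edges. -/
def circVerts {V : Type u} (C : Set (Sym2 V)) : Set V :=
  {x | ∃ e ∈ C, x ∈ e}

/-- A set of edges is independent if its edges are pairwise nonadjacent. -/
def IndepEdges {V : Type u} (A : Set (Sym2 V)) : Prop :=
  ∀ e₁ ∈ A, ∀ e₂ ∈ A, e₁ ≠ e₂ → ∀ x : V, x ∈ e₁ → x ∉ e₂

/-- 2-connected: connected, at least 3 vertices, and deleting any one vertex
leaves the graph connected. -/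
def TwoConnected {V : Type u} (G : SimpleGraph V) : Prop :=
  G.Connected ∧ (3 : Cardinal) ≤ Cardinal.mk V ∧
    ∀ x : V, (G.induce {x}ᶜ).Connected

/-- 3-connected: at least 4 vertices and deleting any two vertices leaves
the graph connected. -/
def ThreeConnected {V : Type u} (G : SimpleGraph V) : Prop :=
  (4 : Cardinal) ≤ Cardinal.mk V ∧
    ∀ x y : V, (G.induce ({x, y} : Set V)ᶜ).Connected

/-- k-connected: more than k vertices and deleting any set of fewer than k
vertices leaves the graph connected. -/
def KConnected {V : Type u} (k : ℕ) (G : SimpleGraph V) : Prop :=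
  (k : Cardinal) < Cardinal.mk V ∧
    ∀ s : Set V, s.Finite → Nat.card s < k → (G.induce sᶜ).Connected

/-- The image of a set of edges of `G` under an edge map `f`. -/
def mapEdges {V : Type u} {V' : Type v} (G : SimpleGraph V) (G' : SimpleGraph V')
    (f : G.edgeSet → G'.edgeSet) (C : Set (Sym2 V)) : Set (Sym2 V') :=
  {e' | ∃ e : G.edgeSet, (e : Sym2 V) ∈ C ∧ (f e : Sym2 V') = e'}

/-- The preimage of a set of edges of `G'` under an edge map `f`. -/
def preimEdges {V : Type u} {V' : Type v} (G : SimpleGraph V) (G' : SimpleGraph V')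
    (f : G.edgeSet → G'.edgeSet) (S : Set (Sym2 V')) : Set (Sym2 V) :=
  {e | ∃ he : e ∈ G.edgeSet, (f ⟨e, he⟩ : Sym2 V') ∈ S}

/-- A circuit injection from `G` onto `G'`: an injective, surjective map on
edges carrying every circuit of `G` to a circuit of `G'`, where `G'` has no
isolated vertices. -/
def IsCircuitInjection {V : Type u} {V' : Type v} (G : SimpleGraph V) (G' : SimpleGraph V')
    (f : G.edgeSet → G'.edgeSet) : Prop :=
  Function.Injective f ∧ Function.Surjective f ∧
    (∀ C : Set (Sym2 V), IsCircuit G C → IsCircuit G' (mapEdges G G' f C)) ∧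
    ∀ x : V', ∃ y : V', G'.Adj x y

/-- `G` contains a subgraph of type X with connectors `e₁`, `e₂`, `e₃`:
two vertex-disjoint circuits `CA`, `CB`, edges `e₁ = (a₁,b₁)`, `e₂ = (a₂,b₂)`,
and a path from `a₃` to `b₃` internally disjoint from both circuits, with
`a₁,a₂,a₃` distinct on `CA` and `b₁,b₂,b₃` distinct on `CB`, and `e₃` an edge
of the path. -/
def IsTypeXWith {V : Type u} (G : SimpleGraph V) (e₁ e₂ e₃ : Sym2 V) : Prop :=
  ∃ (a₁ a₂ a₃ b₁ b₂ b₃ : V) (CA CB : Set (Sym2 V)) (P : G.Walk a₃ b₃),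
    IsCircuit G CA ∧ IsCircuit G CB ∧
    Disjoint (circVerts CA) (circVerts CB) ∧
    a₁ ∈ circVerts CA ∧ a₂ ∈ circVerts CA ∧ a₃ ∈ circVerts CA ∧
    b₁ ∈ circVerts CB ∧ b₂ ∈ circVerts CB ∧ b₃ ∈ circVerts CB ∧
    a₁ ≠ a₂ ∧ a₁ ≠ a₃ ∧ a₂ ≠ a₃ ∧ b₁ ≠ b₂ ∧ b₁ ≠ b₃ ∧ b₂ ≠ b₃ ∧
    G.Adj a₁ b₁ ∧ G.Adj a₂ b₂ ∧ e₁ = s(a₁, b₁) ∧ e₂ = s(a₂, b₂) ∧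
    P.IsPath ∧
    (∀ x ∈ P.support, x ≠ a₃ → x ≠ b₃ → x ∉ circVerts CA ∪ circVerts CB) ∧
    e₃ ∈ P.edges

/-- `G` is (all of) a graph of type X with connectors `e₁`, `e₂`, `e₃`. -/
def IsTypeXGraph {V : Type u} (G : SimpleGraph V) (e₁ e₂ e₃ : Sym2 V) : Prop :=
  ∃ (a₁ a₂ a₃ b₁ b₂ b₃ : V) (CA CB : Set (Sym2 V)) (P : G.Walk a₃ b₃),
    IsCircuit G CA ∧ IsCircuit G CB ∧
    Disjoint (circVerts CA) (circVerts CB) ∧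
    a₁ ∈ circVerts CA ∧ a₂ ∈ circVerts CA ∧ a₃ ∈ circVerts CA ∧
    b₁ ∈ circVerts CB ∧ b₂ ∈ circVerts CB ∧ b₃ ∈ circVerts CB ∧
    a₁ ≠ a₂ ∧ a₁ ≠ a₃ ∧ a₂ ≠ a₃ ∧ b₁ ≠ b₂ ∧ b₁ ≠ b₃ ∧ b₂ ≠ b₃ ∧
    G.Adj a₁ b₁ ∧ G.Adj a₂ b₂ ∧ e₁ = s(a₁, b₁) ∧ e₂ = s(a₂, b₂) ∧
    P.IsPath ∧
    (∀ x ∈ P.support, x ≠ a₃ → x ≠ b₃ → x ∉ circVerts CA ∪ circVerts CB) ∧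
    e₃ ∈ P.edges ∧
    G.edgeSet = CA ∪ CB ∪ {e₁, e₂} ∪ {e | e ∈ P.edges}


section Helpers

set_option maxHeartbeats 1000000

variable {V : Type u} {G : SimpleGraph V}

lemma mem_support_of_mem_edges2 {a b : V} {p : G.Walk a b} {e : Sym2 V} {x : V}
    (he : e ∈ p.edges) (hx : x ∈ e) : x ∈ p.support := by
  induction e with
  | _ y z =>
    rcases Sym2.mem_iff.mp hx with rfl | rfl
    · exact p.fst_mem_support_of_mem_edges he
    · exact p.snd_mem_support_of_mem_edges he

lemma closed_mem_support_tail {u : V} {w : G.Walk u u} (hne : w ≠ Walk.nil) {y : V} :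
    y ∈ w.support ↔ y ∈ w.support.tail := by
  cases w with
  | nil => exact absurd rfl hne
  | cons h p =>
    simp only [Walk.support_cons, List.tail_cons, List.mem_cons]
    constructor
    · rintro (rfl | hy)
      · exact p.end_mem_support
      · exact hy
    · exact Or.inr

lemma rotate_ne_nil [DecidableEq V] {u x : V} {w : G.Walk u u} (hne : w ≠ Walk.nil)
    (hx : x ∈ w.support) : w.rotate x hx ≠ Walk.nil := by
  intro h
  have h3 := (w.support_rotate x hx).perm.length_eq
  rw [h] at h3
  simp only [Walk.support_nil, List.tail_cons, List.length_nil] at h3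
  cases w with
  | nil => exact hne rfl
  | cons hadj p =>
    rw [Walk.support_cons, List.tail_cons] at h3
    exact p.support_ne_nil (List.length_eq_zero_iff.mp h3.symm)

lemma mem_support_rotate [DecidableEq V] {u x y : V} {w : G.Walk u u} (hne : w ≠ Walk.nil) (hx : x ∈ w.support) :
    y ∈ (w.rotate x hx).support ↔ y ∈ w.support := by
  classical
  rw [closed_mem_support_tail (rotate_ne_nil hne hx), closed_mem_support_tail hne]
  exact (w.support_rotate x hx).mem_iff

lemma reachDel {A : Set (Sym2 V)} {a b : V} (p : G.Walk a b)
    (hp : ∀ e ∈ p.edges, e ∉ A) : (G.deleteEdges A).Reachable a b :=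
  ⟨p.toDeleteEdges A hp⟩

lemma walkCross {A : Set (Sym2 V)} {a b x y : V} (p : G.Walk a b) (hnd : p.edges.Nodup)
    (he : s(x, y) ∈ p.edges) (honly : ∀ e ∈ p.edges, e ∈ A → e = s(x, y)) :
    ((G.deleteEdges A).Reachable a x ∧ (G.deleteEdges A).Reachable y b) ∨
      ((G.deleteEdges A).Reachable a y ∧ (G.deleteEdges A).Reachable x b) := by
  induction p with
  | nil => simp at he
  | @cons a c b h q ih =>
    rw [Walk.edges_cons] at he hnd honly
    rcases List.mem_cons.mp he with heq | hin
    · have hq : ∀ e ∈ q.edges, e ∉ A := by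
        intro e hee heA
        have := honly e (List.mem_cons_of_mem _ hee) heA
        rw [this, heq] at hee
        exact (List.nodup_cons.mp hnd).1 hee
      have hreach : (G.deleteEdges A).Reachable c b := reachDel q hq
      rcases Sym2.eq_iff.mp heq.symm with ⟨rfl, rfl⟩ | ⟨rfl, rfl⟩
      · exact Or.inl ⟨Reachable.refl _, hreach⟩
      · exact Or.inr ⟨Reachable.refl _, hreach⟩
    · have hac : s(a, c) ∉ A := by
        intro hA
        have := honly _ List.mem_cons_self hA
        exact (List.nodup_cons.mp hnd).1 (this ▸ hin)
      have hstep : (G.deleteEdges A).Reachable a c :=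
        Adj.reachable (by rw [deleteEdges_adj]; exact ⟨h, hac⟩)
      rcases ih (List.nodup_cons.mp hnd).2 hin
          (fun e hee heA => honly e (List.mem_cons_of_mem _ hee) heA) with ⟨h1, h2⟩ | ⟨h1, h2⟩
      · exact Or.inl ⟨hstep.trans h1, h2⟩
      · exact Or.inr ⟨hstep.trans h1, h2⟩

lemma firstMeet {a b : V} (p : G.Walk a b) (S : Set V) (hb : b ∈ S) :
    ∃ x, x ∈ S ∧ ∃ R : G.Walk a x, (∀ y ∈ R.support, y ∈ S → y = x) ∧
      (∀ y ∈ R.support, y ∈ p.support) := by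
  induction p with
  | nil =>
    exact ⟨_, hb, Walk.nil, fun y hy _ => by simpa using hy, fun y hy => hy⟩
  | @cons a c b h q ih =>
    by_cases ha : a ∈ S
    · exact ⟨a, ha, Walk.nil, fun y hy _ => by simpa using hy,
        fun y hy => by simp at hy; simp [hy]⟩
    · obtain ⟨x, hxS, R', hR1, hR2⟩ := ih hb
      refine ⟨x, hxS, Walk.cons h R', ?_, ?_⟩
      · intro y hy hyS
        rcases List.mem_cons.mp (by simpa using hy) with rfl | hy'
        · exact absurd hyS ha
        · exact hR1 y hy' hyS
      · intro y hy
        rcases List.mem_cons.mp (by simpa using hy) with rfl | hy'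
        · simp
        · simp [hR2 y hy']

/-- Hom from induced subgraph into the ambient graph. -/
def inducedHom (s : Set V) : G.induce s →g G := ⟨Subtype.val, fun h => h⟩

lemma inducedWalk {s : Set V} {a b : s} (p : (G.induce s).Walk a b) :
    ∃ q : G.Walk a.val b.val, ∀ y ∈ q.support, y ∈ s := by
  refine ⟨p.map (inducedHom s), ?_⟩
  intro y hy
  have hy' : y ∈ p.support.map (inducedHom (G := G) s) := by rw [← Walk.support_map]; exact hy
  rw [List.mem_map] at hy'
  obtain ⟨z, _, rfl⟩ := hy'
  exact z.2

lemma exists_ne_ne (hcard : (3 : Cardinal) ≤ Cardinal.mk V) (u w : V) :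
    ∃ t : V, t ≠ u ∧ t ≠ w := by
  by_contra hc
  push_neg at hc
  have hsurj : Function.Surjective (fun b : ULift.{u} Bool => if b.down then u else w) := by
    intro t
    rcases eq_or_ne t u with rfl | h
    · exact ⟨⟨true⟩, rfl⟩
    · exact ⟨⟨false⟩, by simp [hc t h]⟩
  have h2 := Cardinal.mk_le_of_surjective hsurj
  rw [Cardinal.mk_fintype (ULift Bool)] at h2
  simp only [Fintype.card_ulift, Fintype.card_bool, Nat.cast_ofNat] at h2
  have := hcard.trans h2
  norm_num at this

lemma exists_adj_of_walk {W : Type v} {H : SimpleGraph W} {a b : W} (p : H.Walk a b)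
    (hne : a ≠ b) : ∃ z, H.Adj a z := by
  cases p with
  | nil => exact absurd rfl hne
  | cons h q => exact ⟨_, h⟩

lemma exists_other_neighbor (hconn : G.Connected) (hcard : (3 : Cardinal) ≤ Cardinal.mk V)
    (hdel : ∀ x : V, (G.induce {x}ᶜ).Connected) {u w : V} (h : G.Adj u w) :
    ∃ w', G.Adj w w' ∧ w' ≠ u := by
  obtain ⟨t, htu, htw⟩ := exists_ne_ne hcard u w
  have hw : w ∈ ({u}ᶜ : Set V) := by simp [h.ne']
  have ht : t ∈ ({u}ᶜ : Set V) := by simp [htu]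
  have hr : ((G.induce ({u}ᶜ : Set V))).Reachable ⟨w, hw⟩ ⟨t, ht⟩ :=
    (hdel u).preconnected _ _
  obtain ⟨pw⟩ := hr
  obtain ⟨z, hadj⟩ := exists_adj_of_walk pw (by simp [Subtype.ext_iff]; exact fun h => htw h.symm)
  exact ⟨z.val, hadj, fun h => z.2 (by simp [h])⟩

lemma walk_cons_of_ne {a b : V} (p : G.Walk a b) (hne : a ≠ b) :
    ∃ (c : V) (had : G.Adj a c) (q : G.Walk c b), p = Walk.cons had q := by
  cases p with
  | nil => exact absurd rfl hne
  | cons h q => exact ⟨_, h, q, rfl⟩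

lemma cycle_star_at_base {vv : V} {w : G.Walk vv vv} (hw : w.IsCycle) :
    ∃ dA dB, dA ∈ w.edges ∧ dB ∈ w.edges ∧ dA ≠ dB ∧ vv ∈ dA ∧ vv ∈ dB ∧
      ∀ d ∈ w.edges, vv ∈ d → d = dA ∨ d = dB := by
  cases w with
  | nil => exact absurd rfl hw.ne_nil
  | @cons _ b _ h rest =>
    have hnodupE : (Walk.cons h rest).edges.Nodup := hw.isTrail.edges_nodup
    have hrestnodup : rest.support.Nodup := by
      have := hw.support_nodup -- support.tail.Nodup
      simpa using this
    have hvvb : vv ≠ b := h.ne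
    obtain ⟨c, h₂, Q', hrr⟩ := walk_cons_of_ne rest.reverse hvvb
    refine ⟨s(vv, b), s(vv, c), by simp, ?_, ?_, by simp, by simp, ?_⟩
    · have : s(vv, c) ∈ rest.reverse.edges := by rw [hrr]; simp
      rw [Walk.edges_reverse, List.mem_reverse] at this
      simp [this]
    · intro heq
      rcases Sym2.eq_iff.mp heq with ⟨-, hbc⟩ | ⟨hvc, hbv⟩
      · subst hbc
        have h1 : s(vv, b) ∈ rest.reverse.edges := by rw [hrr]; simp
        rw [Walk.edges_reverse, List.mem_reverse] at h1
        rw [Walk.edges_cons, List.nodup_cons] at hnodupE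
        exact hnodupE.1 h1
      · exact hvvb hbv.symm
    · intro d hd hvd
      rw [Walk.edges_cons, List.mem_cons] at hd
      rcases hd with rfl | hd
      · exact Or.inl rfl
      · right
        have hdrev : d ∈ rest.reverse.edges := by rw [Walk.edges_reverse, List.mem_reverse]; exact hd
        rw [hrr, Walk.edges_cons, List.mem_cons] at hdrev
        rcases hdrev with rfl | hdrev
        · rfl
        · exfalso
          have hvQ : vv ∈ Q'.support := mem_support_of_mem_edges2 hdrev hvd
          have : rest.reverse.support.Nodup := by
            rw [Walk.support_reverse]; exact List.nodup_reverse.mpr hrestnodup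
          rw [hrr, Walk.support_cons, List.nodup_cons] at this
          exact this.1 hvQ

lemma cycle_star {x vv : V} {w : G.Walk x x} (hw : w.IsCycle) {d₁ : Sym2 V}
    (hd₁ : d₁ ∈ w.edges) (hv : vv ∈ d₁) :
    ∃ d₂ ∈ w.edges, vv ∈ d₂ ∧ d₂ ≠ d₁ ∧ ∀ d ∈ w.edges, vv ∈ d → d = d₁ ∨ d = d₂ := by
  classical
  have hsup : vv ∈ w.support := mem_support_of_mem_edges2 hd₁ hv
  have hrot : (w.rotate vv hsup).IsCycle := hw.rotate hsup
  have hedges : ∀ d : Sym2 V, d ∈ (w.rotate vv hsup).edges ↔ d ∈ w.edges :=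
    fun d => (w.rotate_edges vv hsup).mem_iff
  obtain ⟨dA, dB, hA, hB, hAB, hvA, hvB, hclass⟩ := cycle_star_at_base hrot
  have hd₁' : d₁ ∈ (w.rotate vv hsup).edges := (hedges d₁).mpr hd₁
  rcases hclass d₁ hd₁' hv with rfl | rfl
  · exact ⟨dB, (hedges dB).mp hB, hvB, fun hh => hAB hh.symm,
      fun d hd hvd => hclass d ((hedges d).mpr hd) hvd⟩
  · exact ⟨dA, (hedges dA).mp hA, hvA, hAB,
      fun d hd hvd => (hclass d ((hedges d).mpr hd) hvd).symm⟩

lemma pair_across [DecidableEq V] {A : Set (Sym2 V)}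
    (hpair : ∀ {x : V} (w : G.Walk x x), w.IsCycle → ∀ {e₁ : Sym2 V}, e₁ ∈ w.edges → e₁ ∈ A →
      ∃ e₂ ∈ w.edges, e₂ ∈ A ∧ e₂ ≠ e₁ ∧ ∀ e ∈ w.edges, e ∈ A → e = e₁ ∨ e = e₂)
    {s t o : V} (Z : G.Walk o o) (hZ : Z.IsCycle) (hs : s ∈ Z.support) (ht : t ∈ Z.support)
    (hst : (G.deleteEdges A).connectedComponentMk s ≠ (G.deleteEdges A).connectedComponentMk t) :
    ∃ p q, s(p, q) ∈ A ∧ (G.deleteEdges A).Reachable s p ∧ (G.deleteEdges A).Reachable q t := by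
  classical
  have hsnet : s ≠ t := fun h => hst (h ▸ rfl)
  set Z' := Z.rotate s hs with hZ'def
  have hZ' : Z'.IsCycle := hZ.rotate hs
  have ht' : t ∈ Z'.support := (mem_support_rotate hZ.ne_nil hs).mpr ht
  set E₁ := Z'.takeUntil t ht' with hE₁
  set E₂ := Z'.dropUntil t ht' with hE₂
  have hsplit : E₁.append E₂ = Z' := Z'.take_spec ht'
  have hedges : Z'.edges = E₁.edges ++ E₂.edges := by
    rw [← Walk.edges_append, hsplit]
  have hnd : (E₁.edges ++ E₂.edges).Nodup := by
    rw [← hedges]; exact hZ'.isTrail.edges_nodup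
  have hdisj := List.disjoint_of_nodup_append hnd
  -- each side contains an A-edge
  have ha₁ : ∃ a ∈ E₁.edges, a ∈ A := by
    by_contra hc
    push_neg at hc
    exact hst ((SimpleGraph.ConnectedComponent.eq).mpr (reachDel E₁ hc))
  have ha₂ : ∃ a ∈ E₂.edges, a ∈ A := by
    by_contra hc
    push_neg at hc
    exact hst ((SimpleGraph.ConnectedComponent.eq).mpr (reachDel E₂ hc).symm)
  obtain ⟨a₁, ha₁w, ha₁A⟩ := ha₁
  obtain ⟨a₂, ha₂w, ha₂A⟩ := ha₂
  have ha₁Z : a₁ ∈ Z'.edges := by rw [hedges]; exact List.mem_append_left _ ha₁w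
  have ha₂Z : a₂ ∈ Z'.edges := by rw [hedges]; exact List.mem_append_right _ ha₂w
  obtain ⟨e₂, he₂Z, he₂A, he₂ne, hclass⟩ := hpair Z' hZ' ha₁Z ha₁A
  have ha₂eq : a₂ = e₂ := by
    rcases hclass a₂ ha₂Z ha₂A with hh | hh
    · exact absurd (hh ▸ ha₂w) (fun hmem => hdisj ha₁w (hh ▸ ha₂w))
    · exact hh
  have honly : ∀ e ∈ E₁.edges, e ∈ A → e = a₁ := by
    intro e hew heA
    have heZ : e ∈ Z'.edges := by rw [hedges]; exact List.mem_append_left _ hew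
    rcases hclass e heZ heA with hh | hh
    · exact hh
    · exact absurd (ha₂eq ▸ hh ▸ hew) (fun hmem => hdisj hmem (ha₂eq ▸ ha₂w))
  obtain ⟨⟨p, q⟩, rfl⟩ := a₁.exists_rep
  rcases walkCross (A := A) E₁ (List.Nodup.of_append_left hnd) ha₁w honly with ⟨h1, h2⟩ | ⟨h1, h2⟩
  · exact ⟨p, q, ha₁A, h1, h2⟩
  · exact ⟨q, p, by rwa [Sym2.eq_swap], h1, h2⟩

lemma cycle_arcs [DecidableEq V] {x w : V} {C : G.Walk x x} (hC : C.IsCycle)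
    (hw : w ∈ C.support) (hxw : x ≠ w) :
    (C.takeUntil w hw).IsPath ∧ (C.dropUntil w hw).IsPath := by
  have hspec : (C.takeUntil w hw).append (C.dropUntil w hw) = C := C.take_spec hw
  have hsupp : C.support = (C.takeUntil w hw).support ++ (C.dropUntil w hw).support.tail := by
    have := congrArg Walk.support hspec
    rw [Walk.support_append] at this
    exact this.symm
  have htail : C.support.tail.Nodup := hC.support_nodup
  have h1 : (C.takeUntil w hw).support = x :: (C.takeUntil w hw).support.tail :=
    Walk.support_eq_cons _
  have h2 : (C.dropUntil w hw).support = w :: (C.dropUntil w hw).support.tail :=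
    Walk.support_eq_cons _
  have hCtail : C.support.tail =
      (C.takeUntil w hw).support.tail ++ (C.dropUntil w hw).support.tail := by
    have hh := hsupp
    rw [h1] at hh
    rw [Walk.support_eq_cons C] at hh
    rw [List.cons_append] at hh
    injection hh with _ h
  rw [hCtail] at htail
  have hdisj := List.disjoint_of_nodup_append htail
  have hnd1 := List.Nodup.of_append_left htail
  have hnd2 := List.Nodup.of_append_right htail
  constructor
  · rw [Walk.isPath_def, h1, List.nodup_cons]
    refine ⟨?_, hnd1⟩
    intro hxmem
    -- x is in drop tail
    have hxdrop : x ∈ (C.dropUntil w hw).support.tail := by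
      have hxend : x ∈ (C.dropUntil w hw).support := Walk.end_mem_support _
      rw [h2] at hxend
      rcases List.mem_cons.mp hxend with rfl | hh
      · exact absurd rfl hxw
      · exact hh
    exact (hdisj hxmem) hxdrop
  · rw [Walk.isPath_def, h2, List.nodup_cons]
    refine ⟨?_, hnd2⟩
    intro hwmem
    have hwtake : w ∈ (C.takeUntil w hw).support.tail := by
      have hwend : w ∈ (C.takeUntil w hw).support := Walk.end_mem_support _
      rw [h1] at hwend
      rcases List.mem_cons.mp hwend with hh | hh
      · exact absurd hh.symm hxw
      · exact hh
    exact (hdisj hwtake) hwmem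

lemma glue_cycle {t x w : V} {S : Set V} (R : G.Walk t x) (hR : R.IsPath)
    (D : G.Walk x w) (hD : D.IsPath) (hadj : G.Adj w t)
    (hRS : ∀ y ∈ R.support, y ∈ S → y = x) (hDS : ∀ y ∈ D.support, y ∈ S)
    (htS : t ∉ S) (hwR : w ∉ R.support) :
    ∃ (o : V) (Z : G.Walk o o), Z.IsCycle ∧ t ∈ Z.support ∧ ∀ y ∈ D.support, y ∈ Z.support := by
  have hxS : x ∈ S := hDS x D.start_mem_support
  have hlong : (R.append D).IsPath := by
    rw [Walk.isPath_def, Walk.support_append]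
    apply List.Nodup.append ((Walk.isPath_def _).mp hR)
      (((Walk.isPath_def _).mp hD).sublist (by
        conv_rhs => rw [Walk.support_eq_cons D]
        exact List.sublist_cons_self _ _))
    intro y hyR hyD
    have hyD' : y ∈ D.support := List.mem_of_mem_tail hyD
    have : y = x := hRS y hyR (hDS y hyD')
    subst this
    have : y ∉ D.support.tail := by
      have := (Walk.isPath_def _).mp hD
      rw [Walk.support_eq_cons D, List.nodup_cons] at this
      exact this.1
    exact this hyD
  have hne : s(w, t) ∉ (R.append D).edges := by
    rw [Walk.edges_append, List.mem_append]
    rintro (h | h)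
    · exact hwR (mem_support_of_mem_edges2 h (Sym2.mem_mk_left w t))
    · exact htS (hDS t (mem_support_of_mem_edges2 h (Sym2.mem_mk_right w t)))
  refine ⟨w, Walk.cons hadj (R.append D), Path.cons_isCycle ⟨R.append D, hlong⟩ hadj hne, ?_, ?_⟩
  · rw [Walk.support_cons]
    exact List.mem_cons_of_mem _ (R.append D).start_mem_support
  · intro y hy
    rw [Walk.support_cons]
    exact List.mem_cons_of_mem _ ((Walk.mem_support_append_iff R D).mpr (Or.inr hy))

theorem cycle_through_two [DecidableEq V] (hconn : G.Connected)
    (hcard : (3 : Cardinal) ≤ Cardinal.mk V)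
    (hdel : ∀ x : V, (G.induce {x}ᶜ).Connected) {s t : V} (hst : s ≠ t) :
    ∃ (o : V) (Z : G.Walk o o), Z.IsCycle ∧ s ∈ Z.support ∧ t ∈ Z.support := by
  have key : ∀ n : ℕ, ∀ s t : V, s ≠ t → G.dist s t = n →
      ∃ (o : V) (Z : G.Walk o o), Z.IsCycle ∧ s ∈ Z.support ∧ t ∈ Z.support := by
    intro n
    induction n using Nat.strong_induction_on with
    | _ n IH =>
      intro s t hst hdist
      have hpos : 0 < G.dist s t := hconn.pos_dist_of_ne hst
      by_cases hn1 : n = 1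
      case pos =>
        rw [hn1] at hdist
        have hadj : G.Adj s t := SimpleGraph.dist_eq_one_iff_adj.mp hdist
        obtain ⟨w', hadj', hw's⟩ := exists_other_neighbor hconn hcard hdel hadj
        have hw't : w' ≠ t := hadj'.ne'
        have hwmem : w' ∈ ({t}ᶜ : Set V) := by simp [hw't]
        have hsmem : s ∈ ({t}ᶜ : Set V) := by simp [hst]
        obtain ⟨pw⟩ := (hdel t).preconnected ⟨w', hwmem⟩ ⟨s, hsmem⟩
        obtain ⟨q, hq⟩ := inducedWalk pw
        set P := q.toPath with hP
        have hPsub : ∀ y ∈ (P : G.Walk w' s).support, y ≠ t := by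
          intro y hy
          have := hq y (q.support_toPath_subset hy)
          simpa using this
        have hinner : (Walk.cons hadj' (P : G.Walk w' s)).IsPath := by
          rw [Walk.cons_isPath_iff]
          exact ⟨P.2, fun hmem => hPsub t hmem rfl⟩
        refine ⟨s, Walk.cons hadj ((⟨Walk.cons hadj' (P : G.Walk w' s), hinner⟩ : G.Path t s) :
            G.Walk t s),
          Path.cons_isCycle _ hadj ?_, by simp, by simp⟩
        · intro hmem
          rw [Walk.edges_cons, List.mem_cons] at hmem
          rcases hmem with hh | hh
          · rcases Sym2.eq_iff.mp hh with ⟨h1, -⟩ | ⟨h1, -⟩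
            · exact hst h1
            · exact hw's h1.symm
          · exact hPsub t (mem_support_of_mem_edges2 hh (Sym2.mem_mk_right s t)) rfl
      case neg =>
        have hn2 : 2 ≤ n := by omega
        obtain ⟨σ, hσ⟩ := (hconn.preconnected s t).exists_walk_length_eq_dist
        obtain ⟨w, hadj_tw, rest, heq⟩ := walk_cons_of_ne σ.reverse (Ne.symm hst)
        have hrestlen : rest.length = n - 1 := by
          have : σ.reverse.length = n := by rw [Walk.length_reverse, hσ, hdist]
          rw [heq, Walk.length_cons] at this
          omega
        have hws : w ≠ s := by
          intro hws_eq
          have hadj_ts : G.Adj t s := hws_eq ▸ hadj_tw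
          have h1' : G.dist s t ≤ 1 := by
            rw [SimpleGraph.dist_comm]
            simpa using G.dist_le hadj_ts.toWalk
          omega
        have hdsw : G.dist s w ≤ n - 1 := by
          have := G.dist_le rest.reverse
          rwa [Walk.length_reverse, hrestlen] at this
        obtain ⟨o, C, hC, hsC, hwC⟩ := IH (G.dist s w) (by omega) s w (fun h => hws h.symm) rfl
        by_cases htC : t ∈ C.support
        · exact ⟨o, C, hC, hsC, htC⟩
        · have htw : t ≠ w := hadj_tw.ne
          have htmem : t ∈ ({w}ᶜ : Set V) := by simp [htw]
          have hsmem : s ∈ ({w}ᶜ : Set V) := by simp [Ne.symm hws]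
          obtain ⟨pw⟩ := (hdel w).preconnected ⟨t, htmem⟩ ⟨s, hsmem⟩
          obtain ⟨q, hq⟩ := inducedWalk pw
          obtain ⟨x, hxS, R, hRmeet, hRsub⟩ := firstMeet q {y | y ∈ C.support} hsC
          set R' := (R.toPath : G.Walk t x) with hR'
          have hR'path : R'.IsPath := R.toPath.2
          have hR'sub : ∀ y ∈ R'.support, y ∈ R.support := fun y hy =>
            R.support_toPath_subset hy
          have hR'meet : ∀ y ∈ R'.support, y ∈ C.support → y = x := fun y hy hyC =>
            hRmeet y (hR'sub y hy) hyC
          have hR'noW : ∀ y ∈ R'.support, y ≠ w := by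
            intro y hy
            have := hq y (hRsub y (hR'sub y hy))
            simpa using this
          have hxC : x ∈ C.support := hxS
          have hxw : x ≠ w := hR'noW x R'.end_mem_support
          -- rotate C at x
          set C' := C.rotate x hxC with hC'def
          have hC' : C'.IsCycle := hC.rotate hxC
          have hwC' : w ∈ C'.support := (mem_support_rotate hC.ne_nil hxC).mpr hwC
          have hsC' : s ∈ C'.support := (mem_support_rotate hC.ne_nil hxC).mpr hsC
          have hmemC' : ∀ y, y ∈ C'.support → y ∈ C.support := fun y hy =>
            (mem_support_rotate hC.ne_nil hxC).mp hy
          obtain ⟨hD₁, hD₂⟩ := cycle_arcs hC' hwC' hxw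
          have hsplit := C'.take_spec hwC'
          have hsarc : s ∈ (C'.takeUntil w hwC').support ∨ s ∈ (C'.dropUntil w hwC').support := by
            have hh : s ∈ ((C'.takeUntil w hwC').append (C'.dropUntil w hwC')).support := by
              rw [hsplit]; exact hsC'
            exact (Walk.mem_support_append_iff _ _).mp hh
          have hadj_wt : G.Adj w t := hadj_tw.symm
          have htS : t ∉ {y | y ∈ C.support} := htC
          have hwR : w ∉ R'.support := fun hmem => hR'noW w hmem rfl
          rcases hsarc with hs1 | hs2
          · have hDS : ∀ y ∈ (C'.takeUntil w hwC').support, y ∈ {y | y ∈ C.support} := by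
              intro y hy
              exact hmemC' y (C'.support_takeUntil_subset hwC' hy)
            obtain ⟨o', Z, hZ, htZ, hDZ⟩ :=
              glue_cycle R' hR'path (C'.takeUntil w hwC') hD₁ hadj_wt hR'meet hDS htS hwR
            exact ⟨o', Z, hZ, hDZ s hs1, htZ⟩
          · have hD₂' : (C'.dropUntil w hwC').reverse.IsPath := hD₂.reverse
            have hDS : ∀ y ∈ (C'.dropUntil w hwC').reverse.support, y ∈ {y | y ∈ C.support} := by
              intro y hy
              rw [Walk.support_reverse, List.mem_reverse] at hy
              exact hmemC' y (C'.support_dropUntil_subset hwC' hy)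
            obtain ⟨o', Z, hZ, htZ, hDZ⟩ :=
              glue_cycle R' hR'path (C'.dropUntil w hwC').reverse hD₂' hadj_wt hR'meet hDS htS hwR
            refine ⟨o', Z, hZ, hDZ s ?_, htZ⟩
            rw [Walk.support_reverse, List.mem_reverse]
            exact hs2
  exact key (G.dist s t) s t hst rfl

lemma reach_of_mem_support {H : SimpleGraph V} {a b y : V} (p : H.Walk a b)
    (hy : y ∈ p.support) : H.Reachable a y := by
  obtain ⟨q, r, -⟩ := Walk.mem_support_iff_exists_append.mp hy
  exact ⟨q⟩

lemma del_walk_edges_not_mem {A : Set (Sym2 V)} {a b : V} (p : (G.deleteEdges A).Walk a b) :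
    ∀ e ∈ p.edges, e ∈ G.edgeSet ∧ e ∉ A := by
  intro e he
  have := p.edges_subset_edgeSet he
  rwa [edgeSet_deleteEdges, Set.mem_diff] at this

/-- Transfer a walk in `G.deleteEdges A` to `G`. -/
def delTransfer {A : Set (Sym2 V)} {a b : V} (p : (G.deleteEdges A).Walk a b) : G.Walk a b :=
  p.transfer G (fun e he => (del_walk_edges_not_mem p e he).1)

lemma delTransfer_support {A : Set (Sym2 V)} {a b : V} (p : (G.deleteEdges A).Walk a b) :
    (delTransfer p).support = p.support := Walk.support_transfer _ _

lemma delTransfer_edges {A : Set (Sym2 V)} {a b : V} (p : (G.deleteEdges A).Walk a b) :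
    (delTransfer p).edges = p.edges := Walk.edges_transfer _ _

lemma delTransfer_isPath {A : Set (Sym2 V)} {a b : V} {p : (G.deleteEdges A).Walk a b}
    (hp : p.IsPath) : (delTransfer p).IsPath := hp.transfer _

lemma comp_ne_of_A_edge [DecidableEq V] {A : Set (Sym2 V)}
    (hpair : ∀ {x : V} (w : G.Walk x x), w.IsCycle → ∀ {e₁ : Sym2 V}, e₁ ∈ w.edges → e₁ ∈ A →
      ∃ e₂ ∈ w.edges, e₂ ∈ A ∧ e₂ ≠ e₁ ∧ ∀ e ∈ w.edges, e ∈ A → e = e₁ ∨ e = e₂)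
    (hAsub : A ⊆ G.edgeSet) {x y : V} (hxy : s(x, y) ∈ A) :
    (G.deleteEdges A).connectedComponentMk x ≠ (G.deleteEdges A).connectedComponentMk y := by
  intro hcomp
  obtain ⟨p0⟩ := (SimpleGraph.ConnectedComponent.eq).mp hcomp
  set p := p0.toPath with hpdef
  have hq : (delTransfer (p : (G.deleteEdges A).Walk x y)).IsPath := delTransfer_isPath p.2
  set q := delTransfer (p : (G.deleteEdges A).Walk x y) with hqdef
  have hqE : ∀ e ∈ q.edges, e ∉ A := by
    intro e he
    rw [hqdef, delTransfer_edges] at he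
    exact (del_walk_edges_not_mem _ e he).2
  have hadjxy : G.Adj x y := (G.mem_edgeSet).mp (hAsub hxy)
  have hne : s(y, x) ∉ q.edges := fun hmem => hqE _ hmem (by rwa [Sym2.eq_swap])
  have hcyc : (Walk.cons hadjxy.symm q).IsCycle := Path.cons_isCycle ⟨q, hq⟩ hadjxy.symm hne
  have hyxA : s(y, x) ∈ A := by rwa [Sym2.eq_swap]
  obtain ⟨e₂, he₂w, he₂A, he₂ne, -⟩ := hpair _ hcyc (by simp) hyxA
  rw [Walk.edges_cons, List.mem_cons] at he₂w
  rcases he₂w with rfl | hh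
  · exact he₂ne rfl
  · exact hqE _ hh he₂A

lemma triangle_contradiction [DecidableEq V] {A : Set (Sym2 V)}
    (hpair : ∀ {x : V} (w : G.Walk x x), w.IsCycle → ∀ {e₁ : Sym2 V}, e₁ ∈ w.edges → e₁ ∈ A →
      ∃ e₂ ∈ w.edges, e₂ ∈ A ∧ e₂ ≠ e₁ ∧ ∀ e ∈ w.edges, e ∈ A → e = e₁ ∨ e = e₂)
    (hAsub : A ⊆ G.edgeSet)
    {x₀ y₀ z pp qq rr ss : V}
    (he₀ : s(x₀, y₀) ∈ A) (heA : s(pp, qq) ∈ A) (heB : s(rr, ss) ∈ A)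
    (h1 : (G.deleteEdges A).Reachable z pp) (h2 : (G.deleteEdges A).Reachable qq x₀)
    (h3 : (G.deleteEdges A).Reachable y₀ rr) (h4 : (G.deleteEdges A).Reachable ss z)
    (hzx : (G.deleteEdges A).connectedComponentMk z ≠ (G.deleteEdges A).connectedComponentMk x₀)
    (hzy : (G.deleteEdges A).connectedComponentMk z ≠ (G.deleteEdges A).connectedComponentMk y₀)
    (hxy : (G.deleteEdges A).connectedComponentMk x₀ ≠
      (G.deleteEdges A).connectedComponentMk y₀) : False := by
  classical
  set D := G.deleteEdges A with hD
  -- component equalities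
  have hcz : ∀ {a : V}, D.Reachable z a → D.connectedComponentMk a = D.connectedComponentMk z :=
    fun h => (ConnectedComponent.eq.mpr h).symm
  have compz_pp : D.connectedComponentMk pp = D.connectedComponentMk z := hcz h1
  have compz_ss : D.connectedComponentMk ss = D.connectedComponentMk z := hcz h4.symm
  have compx_qq : D.connectedComponentMk qq = D.connectedComponentMk x₀ :=
    ConnectedComponent.eq.mpr h2
  have compy_rr : D.connectedComponentMk rr = D.connectedComponentMk y₀ :=
    (ConnectedComponent.eq.mpr h3).symm
  -- edge distinctness
  have hAne0 : s(pp, qq) ≠ s(x₀, y₀) := by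
    intro hh
    rcases Sym2.eq_iff.mp hh with ⟨h5, -⟩ | ⟨h5, -⟩
    · exact hzx (compz_pp.symm.trans (congrArg D.connectedComponentMk h5))
    · exact hzy (compz_pp.symm.trans (congrArg D.connectedComponentMk h5))
  have hBne0 : s(rr, ss) ≠ s(x₀, y₀) := by
    intro hh
    rcases Sym2.eq_iff.mp hh with ⟨h5, -⟩ | ⟨-, h6⟩
    · exact hxy (compy_rr.symm.trans (congrArg D.connectedComponentMk h5)).symm
    · exact hzx (compz_ss.symm.trans (congrArg D.connectedComponentMk h6))
  have hABne : s(pp, qq) ≠ s(rr, ss) := by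
    intro hh
    rcases Sym2.eq_iff.mp hh with ⟨h5, -⟩ | ⟨-, h6⟩
    · exact hzy (compz_pp.symm.trans ((congrArg D.connectedComponentMk h5).trans compy_rr))
    · exact hxy (compx_qq.symm.trans ((congrArg D.connectedComponentMk h6).trans compy_rr))
  -- adjacencies
  have hadj0 : G.Adj x₀ y₀ := (G.mem_edgeSet).mp (hAsub he₀)
  have hadjA : G.Adj pp qq := (G.mem_edgeSet).mp (hAsub heA)
  have hadjB : G.Adj rr ss := (G.mem_edgeSet).mp (hAsub heB)
  -- paths in D
  obtain ⟨π₁w⟩ := h2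
  obtain ⟨π₂w⟩ := h3
  obtain ⟨π₃w⟩ := h4.trans h1
  set π₁ := π₁w.toPath with hπ₁
  set π₂ := π₂w.toPath with hπ₂
  set π₃ := π₃w.toPath with hπ₃
  set q₁ := delTransfer (π₁ : D.Walk qq x₀) with hq₁
  set q₂ := delTransfer (π₂ : D.Walk y₀ rr) with hq₂
  set q₃ := delTransfer (π₃ : D.Walk ss pp) with hq₃
  have hq₁supp : q₁.support = (π₁ : D.Walk qq x₀).support := delTransfer_support _
  have hq₂supp : q₂.support = (π₂ : D.Walk y₀ rr).support := delTransfer_support _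
  have hq₃supp : q₃.support = (π₃ : D.Walk ss pp).support := delTransfer_support _
  -- comp of support members
  have hsupp₁ : ∀ y ∈ q₁.support, D.connectedComponentMk y = D.connectedComponentMk x₀ := by
    intro y hy
    rw [hq₁supp] at hy
    have := reach_of_mem_support _ hy
    exact (ConnectedComponent.eq.mpr this.symm).trans compx_qq
  have hsupp₂ : ∀ y ∈ q₂.support, D.connectedComponentMk y = D.connectedComponentMk y₀ := by
    intro y hy
    rw [hq₂supp] at hy
    have := reach_of_mem_support _ hy
    exact (ConnectedComponent.eq.mpr this.symm)
  have hsupp₃ : ∀ y ∈ q₃.support, D.connectedComponentMk y = D.connectedComponentMk z := by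
    intro y hy
    rw [hq₃supp] at hy
    have := reach_of_mem_support _ hy
    exact (ConnectedComponent.eq.mpr this.symm).trans compz_ss
  -- big walk
  set W : G.Walk qq pp := q₁.append (Walk.cons hadj0 (q₂.append (Walk.cons hadjB q₃))) with hW
  have hWsupp : W.support = q₁.support ++ (q₂.support ++ q₃.support) := by
    rw [hW, Walk.support_append, Walk.support_cons, List.tail_cons, Walk.support_append,
      Walk.support_cons, List.tail_cons]
  have hWpath : W.IsPath := by
    rw [Walk.isPath_def, hWsupp]
    have h₁nd : q₁.support.Nodup := by
      rw [hq₁supp]; exact (Walk.isPath_def _).mp π₁.2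
    have h₂nd : q₂.support.Nodup := by rw [hq₂supp]; exact (Walk.isPath_def _).mp π₂.2
    have h₃nd : q₃.support.Nodup := by rw [hq₃supp]; exact (Walk.isPath_def _).mp π₃.2
    refine List.Nodup.append h₁nd (List.Nodup.append h₂nd h₃nd ?_) ?_
    · intro a ha₂ ha₃
      exact hzy ((hsupp₃ a ha₃).symm.trans (hsupp₂ a ha₂))
    · intro a ha₁ ha'
      rcases List.mem_append.mp ha' with ha₂ | ha₃
      · exact hxy ((hsupp₁ a ha₁).symm.trans (hsupp₂ a ha₂))
      · exact hzx ((hsupp₃ a ha₃).symm.trans (hsupp₁ a ha₁))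
  have hWedges : ∀ e ∈ W.edges, e = s(x₀, y₀) ∨ e = s(rr, ss) ∨ e ∉ A := by
    intro e he
    rw [hW, Walk.edges_append, Walk.edges_cons, Walk.edges_append, Walk.edges_cons] at he
    have hnotA : ∀ {a b : V} (p : D.Walk a b), e ∈ (delTransfer p).edges → e ∉ A := by
      intro a b p hmem
      rw [delTransfer_edges] at hmem
      exact (del_walk_edges_not_mem p e hmem).2
    rcases List.mem_append.mp he with h | h
    · exact Or.inr (Or.inr (hnotA _ h))
    · rcases List.mem_cons.mp h with rfl | h
      · exact Or.inl rfl
      · rcases List.mem_append.mp h with h | h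
        · exact Or.inr (Or.inr (hnotA _ h))
        · rcases List.mem_cons.mp h with rfl | h
          · exact Or.inr (Or.inl rfl)
          · exact Or.inr (Or.inr (hnotA _ h))
  have hnotW : s(pp, qq) ∉ W.edges := by
    intro hmem
    rcases hWedges _ hmem with hh | hh | hh
    · exact hAne0 hh
    · exact hABne hh
    · exact hh heA
  have hcyc : (Walk.cons hadjA W).IsCycle := Path.cons_isCycle ⟨W, hWpath⟩ hadjA hnotW
  obtain ⟨e₂, he₂w, he₂A, he₂ne, hclass⟩ := hpair _ hcyc (e₁ := s(pp, qq)) (by simp) heA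
  have h0W : s(x₀, y₀) ∈ (Walk.cons hadjA W).edges := by
    rw [Walk.edges_cons, hW, Walk.edges_append, Walk.edges_cons]
    simp
  have hBW : s(rr, ss) ∈ (Walk.cons hadjA W).edges := by
    rw [Walk.edges_cons, hW, Walk.edges_append, Walk.edges_cons, Walk.edges_append,
      Walk.edges_cons]
    simp
  rcases hclass _ h0W he₀ with hh | hh
  · exact hAne0 hh.symm
  · rcases hclass _ hBW heB with hh' | hh'
    · exact hABne hh'.symm
    · exact hBne0 (hh'.trans hh.symm)

section TwoGraphs

variable {V' : Type v} {G' : SimpleGraph V'}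

lemma pair_lemma [DecidableEq V] {f : G.edgeSet → G'.edgeSet} (hf : IsCircuitInjection G G' f) (vv : V')
    {x : V} {w : G.Walk x x} (hw : w.IsCycle) {e₁ : Sym2 V} (h1 : e₁ ∈ w.edges)
    (h1A : e₁ ∈ preimEdges G G' f (G'.incidenceSet vv)) :
    ∃ e₂ ∈ w.edges, e₂ ∈ preimEdges G G' f (G'.incidenceSet vv) ∧ e₂ ≠ e₁ ∧
      ∀ e ∈ w.edges, e ∈ preimEdges G G' f (G'.incidenceSet vv) → e = e₁ ∨ e = e₂ := by
  obtain ⟨hinj, hsurj, hcirc, -⟩ := hf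
  set C : Set (Sym2 V) := {e | e ∈ w.edges} with hC
  obtain ⟨x', w', hw', hCeq⟩ := hcirc C ⟨x, w, hw, rfl⟩
  have he₁ : e₁ ∈ G.edgeSet := w.edges_subset_edgeSet h1
  obtain ⟨he₁', hinc₁⟩ := h1A
  have hd₁mem : (f ⟨e₁, he₁'⟩ : Sym2 V') ∈ w'.edges := by
    have : (f ⟨e₁, he₁'⟩ : Sym2 V') ∈ mapEdges G G' f C := ⟨⟨e₁, he₁'⟩, h1, rfl⟩
    rwa [hCeq] at this
  have hvd₁ : vv ∈ (f ⟨e₁, he₁'⟩ : Sym2 V') := hinc₁.2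
  obtain ⟨d₂, hd₂w, hvd₂, hd₂ne, hclass⟩ := cycle_star hw' hd₁mem hvd₁
  have hd₂map : d₂ ∈ mapEdges G G' f C := by rw [hCeq]; exact hd₂w
  obtain ⟨eb, hebC, hebd₂⟩ := hd₂map
  refine ⟨eb.val, hebC, ?_, ?_, ?_⟩
  · refine ⟨eb.2, ?_⟩
    have : f ⟨eb.val, eb.2⟩ = f eb := by congr
    rw [this, hebd₂]
    exact ⟨(hebd₂ ▸ (f eb).2 : d₂ ∈ G'.edgeSet), hvd₂⟩
  · intro heq
    apply hd₂ne
    rw [← hebd₂]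
    have : eb = ⟨e₁, he₁'⟩ := Subtype.ext heq
    rw [this]
  · intro e hew heA
    obtain ⟨he', hince⟩ := heA
    have hdmem : (f ⟨e, he'⟩ : Sym2 V') ∈ w'.edges := by
      have : (f ⟨e, he'⟩ : Sym2 V') ∈ mapEdges G G' f C := ⟨⟨e, he'⟩, hew, rfl⟩
      rwa [hCeq] at this
    rcases hclass _ hdmem hince.2 with hh | hh
    · left
      have := hinj (Subtype.ext hh : f ⟨e, he'⟩ = f ⟨e₁, he₁'⟩)
      exact congrArg Subtype.val this
    · right
      have := hinj (Subtype.ext (hh.trans hebd₂.symm) : f ⟨e, he'⟩ = f eb)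
      exact congrArg Subtype.val this

end TwoGraphs

end Helpers

/-- If the preimage of a star under a circuit injection from a
2-connected graph is independent, deleting it leaves exactly two components
and every preimage edge joins them. -/
theorem statement4 {V : Type u} {V' : Type v} (G : SimpleGraph V) (G' : SimpleGraph V')
    (h2 : TwoConnected G) (f : G.edgeSet → G'.edgeSet)
    (hf : IsCircuitInjection G G' f) (v : V')
    (hInd : IndepEdges (preimEdges G G' f (G'.incidenceSet v))) :
    ∃ c₁ c₂ : (G.deleteEdges (preimEdges G G' f (G'.incidenceSet v))).ConnectedComponent,
      c₁ ≠ c₂ ∧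
      (∀ c : (G.deleteEdges (preimEdges G G' f (G'.incidenceSet v))).ConnectedComponent,
        c = c₁ ∨ c = c₂) ∧
      ∀ x y : V, s(x, y) ∈ preimEdges G G' f (G'.incidenceSet v) →
        (G.deleteEdges (preimEdges G G' f (G'.incidenceSet v))).connectedComponentMk x ≠
          (G.deleteEdges (preimEdges G G' f (G'.incidenceSet v))).connectedComponentMk y := by
  classical
  obtain ⟨hconn, hcard, hdel⟩ := h2
  set A : Set (Sym2 V) := preimEdges G G' f (G'.incidenceSet v) with hAdef
  have hAsub : A ⊆ G.edgeSet := fun e he => he.1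
  have hpair : ∀ {x : V} (w : G.Walk x x), w.IsCycle → ∀ {e₁ : Sym2 V}, e₁ ∈ w.edges → e₁ ∈ A →
      ∃ e₂ ∈ w.edges, e₂ ∈ A ∧ e₂ ≠ e₁ ∧ ∀ e ∈ w.edges, e ∈ A → e = e₁ ∨ e = e₂ := by
    intro x w hw e₁ h1 h1A
    exact pair_lemma hf v hw h1 h1A
  -- A is nonempty
  obtain ⟨y', hvy'⟩ := hf.2.2.2 v
  have hd₀ : s(v, y') ∈ G'.edgeSet := hvy'
  obtain ⟨eb, heb⟩ := hf.2.1 ⟨s(v, y'), hd₀⟩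
  have he₀A : (eb : Sym2 V) ∈ A := by
    refine ⟨eb.2, ?_⟩
    have hfe : f ⟨(eb : Sym2 V), eb.2⟩ = f eb := rfl
    rw [hfe, heb]
    exact ⟨hd₀, Sym2.mem_mk_left _ _⟩
  obtain ⟨⟨x₀, y₀⟩, hxy₀⟩ := (eb : Sym2 V).exists_rep
  have he₀A' : s(x₀, y₀) ∈ A := by
    have hh := he₀A
    rw [← hxy₀] at hh
    exact hh
  have hx₀y₀ : (G.deleteEdges A).connectedComponentMk x₀ ≠
      (G.deleteEdges A).connectedComponentMk y₀ := comp_ne_of_A_edge hpair hAsub he₀A'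
  refine ⟨(G.deleteEdges A).connectedComponentMk x₀, (G.deleteEdges A).connectedComponentMk y₀,
    hx₀y₀, ?_, ?_⟩
  · -- every component is one of the two
    intro c
    refine ConnectedComponent.ind ?_ c
    intro z
    by_contra hc
    push_neg at hc
    obtain ⟨hz1, hz2⟩ := hc
    -- cycle through z and x₀
    have hzx₀ : z ≠ x₀ := fun h => hz1 (congrArg _ h)
    obtain ⟨o, Z, hZ, hzZ, hx₀Z⟩ := cycle_through_two hconn hcard hdel hzx₀
    obtain ⟨pp, qq, heA, hr1, hr2⟩ := pair_across hpair Z hZ hzZ hx₀Z hz1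
    -- cycle through y₀ and z
    have hy₀z : y₀ ≠ z := fun h => hz2 (congrArg _ h).symm
    obtain ⟨o', Z', hZ', hy₀Z', hzZ'⟩ := cycle_through_two hconn hcard hdel hy₀z
    obtain ⟨rr, ss, heB, hr3, hr4⟩ := pair_across hpair Z' hZ' hy₀Z' hzZ'
      (fun h => hz2 h.symm)
    exact triangle_contradiction hpair hAsub he₀A' heA heB hr1 hr2 hr3 hr4 hz1 hz2 hx₀y₀
  · intro x y hxyA
    exact comp_ne_of_A_edge hpair hAsub hxyA
end

section
/- Let f be a circuit injection from a 2-connected graph G onto a graph G', and let S(v) be the star of a vertex v of G'. Then no edge e = (a,b) of f^{-1}(S(v)) can have both endpoints in the same connected component of G − f^{-1}(S(v)). -/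
open SimpleGraph

universe u v

lemma aux_two_edges {W : Type*} {H : SimpleGraph W} {v : W} {c : H.Walk v v}
    (hc : c.IsCycle) :
    ∃ e₁ e₂ : Sym2 W, e₁ ∈ c.edges ∧ e₂ ∈ c.edges ∧ e₁ ≠ e₂ ∧ v ∈ e₁ ∧ v ∈ e₂ := by
  cases c with
  | nil => exact absurd rfl hc.ne_nil
  | @cons _ b _ h q =>
    rw [SimpleGraph.Walk.cons_isCycle_iff] at hc
    have hbv : b ≠ v := fun hbv => (hbv ▸ h).ne rfl
    have hqn : ¬ q.Nil := SimpleGraph.Walk.not_nil_of_ne hbv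
    have hrn : ¬ q.reverse.Nil := by
      rwa [SimpleGraph.Walk.nil_iff_length_eq, SimpleGraph.Walk.length_reverse,
        ← SimpleGraph.Walk.nil_iff_length_eq]
    obtain ⟨u, h', q', heq⟩ := (SimpleGraph.Walk.not_nil_iff).mp hrn
    have he₂ : s(v, u) ∈ q.edges := by
      have : s(v, u) ∈ q.reverse.edges := by rw [heq]; simp
      rwa [SimpleGraph.Walk.edges_reverse, List.mem_reverse] at this
    refine ⟨s(v, b), s(v, u), by simp, by simp [he₂], ?_, by simp, by simp⟩
    intro hcontra
    exact hc.2 (hcontra ▸ he₂)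

/-- No edge of the preimage of a star has both endpoints in the
same component of the graph minus that preimage. -/
theorem statement5 {V : Type u} {V' : Type v} (G : SimpleGraph V) (G' : SimpleGraph V')
    (h2 : TwoConnected G) (f : G.edgeSet → G'.edgeSet)
    (hf : IsCircuitInjection G G' f) (v : V') :
    ∀ x y : V, s(x, y) ∈ preimEdges G G' f (G'.incidenceSet v) →
      ¬(G.deleteEdges (preimEdges G G' f (G'.incidenceSet v))).Reachable x y := by
  classical
  intro x y hxyT hreach
  set T := preimEdges G G' f (G'.incidenceSet v) with hT
  obtain ⟨hxy, hfS⟩ := hxyT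
  have hadj : G.Adj x y := hxy
  obtain ⟨p0⟩ := hreach
  let q : (G.deleteEdges T).Walk x y := p0.toPath
  have hqpath : q.IsPath := p0.toPath.2
  have hsub : ∀ e ∈ q.edges, e ∈ G.edgeSet := by
    intro e he
    have h1 := q.edges_subset_edgeSet he
    rw [SimpleGraph.edgeSet_deleteEdges] at h1
    exact h1.1
  have hnotT : ∀ e ∈ q.edges, e ∉ T := by
    intro e he
    have h1 := q.edges_subset_edgeSet he
    rw [SimpleGraph.edgeSet_deleteEdges] at h1
    exact h1.2
  let q' : G.Walk x y := q.transfer G hsub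
  have hq'edges : q'.edges = q.edges := q.edges_transfer hsub
  have hq'path : q'.IsPath := hqpath.transfer hsub
  let c : G.Walk y y := SimpleGraph.Walk.cons hadj.symm q'
  have hccyc : c.IsCycle := by
    rw [SimpleGraph.Walk.cons_isCycle_iff]
    refine ⟨hq'path, fun hmem => ?_⟩
    rw [hq'edges] at hmem
    exact hnotT _ hmem (by rw [Sym2.eq_swap]; exact ⟨hxy, hfS⟩)
  have hCcirc : IsCircuit G {e | e ∈ c.edges} := ⟨y, c, hccyc, rfl⟩
  obtain ⟨z, wk, hwkcyc, hEq⟩ := hf.2.2.1 _ hCcirc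
  have hkey : ∀ e' ∈ wk.edges, v ∈ e' → e' = (f ⟨s(x,y), hxy⟩ : Sym2 V') := by
    intro e' he' hve'
    have : e' ∈ mapEdges G G' f {e | e ∈ c.edges} := by rw [hEq]; exact he'
    obtain ⟨g, hgC, hgf⟩ := this
    have hginc : (f g : Sym2 V') ∈ G'.incidenceSet v :=
      ⟨(f g).2, by rw [hgf]; exact hve'⟩
    have hgT : (g : Sym2 V) ∈ T := ⟨g.2, by simpa using hginc⟩
    have hgxy : (g : Sym2 V) = s(x, y) := by
      have hce : c.edges = s(y, x) :: q'.edges := rfl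
      rw [Set.mem_setOf_eq, hce, List.mem_cons] at hgC
      rcases hgC with h1 | h1
      · rw [h1, Sym2.eq_swap]
      · exact absurd hgT (hnotT _ (hq'edges ▸ h1))
    have : g = ⟨s(x,y), hxy⟩ := Subtype.ext hgxy
    rw [← hgf, this]
  have hfmem : (f ⟨s(x,y), hxy⟩ : Sym2 V') ∈ wk.edges := by
    have : (f ⟨s(x,y), hxy⟩ : Sym2 V') ∈ mapEdges G G' f {e | e ∈ c.edges} :=
      ⟨⟨s(x,y), hxy⟩, by
        rw [Set.mem_setOf_eq, show c.edges = s(y,x) :: q'.edges from rfl, Sym2.eq_swap]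
        exact List.mem_cons_self, rfl⟩
    rw [hEq] at this; exact this
  have hvfe : v ∈ (f ⟨s(x,y), hxy⟩ : Sym2 V') := hfS.2
  obtain ⟨u0, hu0⟩ := Sym2.mem_iff_exists.mp hvfe
  have hvsupp : v ∈ wk.support :=
    SimpleGraph.Walk.fst_mem_support_of_mem_edges wk (hu0 ▸ hfmem)
  have hrotcyc := hwkcyc.rotate hvsupp
  obtain ⟨e₁, e₂, he₁, he₂, hne, hve₁, hve₂⟩ := aux_two_edges hrotcyc
  have hrotmem : ∀ e, e ∈ (wk.rotate v hvsupp).edges ↔ e ∈ wk.edges := fun e =>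
    (wk.rotate_edges v hvsupp).mem_iff
  have h1 := hkey e₁ ((hrotmem e₁).mp he₁) hve₁
  have h2 := hkey e₂ ((hrotmem e₂).mp he₂) hve₂
  exact hne (h1.trans h2.symm)
end

section
/- Let G be a 3-connected graph, A a set of independent edges with G − A having two components G₁ and G₂ each of which is 2-connected, and each edge of A joining G₁ to G₂. Then G contains a subgraph of type X whose three connectors all belong to A. -/
open SimpleGraph

universe u v

set_option linter.unusedSectionVars false

section Helpers

namespace StatementSeven

variable {V : Type*} [DecidableEq V] {G : SimpleGraph V}

lemma exists_edge_of_mem_support {u v x : V} (w : G.Walk u v) (hx : x ∈ w.support)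
    (hl : w.length ≠ 0) : ∃ e ∈ w.edges, x ∈ e := by
  induction w with
  | nil => simp at hl
  | @cons a b c h p ih =>
    rw [Walk.support_cons, List.mem_cons] at hx
    rcases hx with rfl | hx
    · exact ⟨s(x, b), by simp, Sym2.mem_mk_left _ _⟩
    · cases p with
      | nil =>
        simp only [Walk.support_nil, List.mem_singleton] at hx
        subst hx
        exact ⟨s(a, x), by simp, Sym2.mem_mk_right _ _⟩
      | cons h' q =>
        obtain ⟨e, he, hxe⟩ := ih hx (by simp)
        exact ⟨e, by rw [Walk.edges_cons]; exact List.mem_cons_of_mem _ he, hxe⟩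

lemma append_isPath' {u v w : V} {p : G.Walk u v} {q : G.Walk v w}
    (hp : p.IsPath) (hq : q.IsPath)
    (hmeet : ∀ x ∈ p.support, x ∈ q.support → x = v) : (p.append q).IsPath := by
  rw [Walk.isPath_def, Walk.support_append, List.nodup_append]
  refine ⟨hp.support_nodup, hq.support_nodup.tail, ?_⟩
  intro x hxp y hxq hxy
  rw [← hxy] at hxq
  have hxq' : x ∈ q.support := List.mem_of_mem_tail hxq
  have hxv := hmeet x hxp hxq'
  subst hxv
  have h2 := hq.support_nodup
  rw [q.support_eq_cons, List.nodup_cons] at h2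
  exact h2.1 hxq

lemma length_eq_one_of_mem_edges {u v : V} {q : G.Walk u v} (hq : q.IsPath)
    (he : s(u, v) ∈ q.edges) : q.length = 1 := by
  induction q with
  | nil => simp at he
  | @cons a b c h p ih =>
    rw [Walk.edges_cons, List.mem_cons] at he
    rcases he with he | he
    · rw [Sym2.eq_iff] at he
      rcases he with ⟨-, rfl⟩ | ⟨rfl, rfl⟩
      · cases p with
        | nil => simp
        | @cons _ d _ h' r =>
          exfalso
          have hend : c ∈ r.support := r.end_mem_support
          have := (Walk.cons_isPath_iff h' r).mp hq.of_cons
          exact this.2 hend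
      · exact absurd rfl h.ne
    · exfalso
      have := p.fst_mem_support_of_mem_edges he
      exact ((Walk.cons_isPath_iff h p).mp hq).2 this

lemma exists_first_hit {u v : V} (p : G.Walk u v) (hp : p.IsPath) (S : Set V) (hv : v ∈ S) :
    ∃ w, w ∈ S ∧ ∃ q : G.Walk u w, q.IsPath ∧ (∀ x ∈ q.support, x ∈ p.support) ∧
      ∀ x ∈ q.support, x ∈ S → x = w := by
  induction p with
  | nil => exact ⟨_, hv, Walk.nil, Walk.IsPath.nil, fun x hx => hx, by simp⟩
  | @cons a b c h p ih =>
    by_cases ha : a ∈ S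
    · exact ⟨a, ha, Walk.nil, Walk.IsPath.nil, by simp, by simp⟩
    · obtain ⟨w, hw, q, hq, hsub, hmeet⟩ := ih hp.of_cons hv
      refine ⟨w, hw, Walk.cons h q, ?_, ?_, ?_⟩
      · rw [Walk.cons_isPath_iff]
        exact ⟨hq, fun hc => ((Walk.cons_isPath_iff h p).mp hp).2 (hsub a hc)⟩
      · intro x hx
        rw [Walk.support_cons, List.mem_cons] at hx ⊢
        rcases hx with rfl | hx
        · exact Or.inl rfl
        · exact Or.inr (hsub x hx)
      · intro x hx hxS
        rw [Walk.support_cons, List.mem_cons] at hx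
        rcases hx with rfl | hx
        · exact absurd hxS ha
        · exact hmeet x hx hxS

lemma isCycle_append {u v : V} {p : G.Walk u v} {q : G.Walk v u}
    (hp : p.IsPath) (hq : q.IsPath) (hne : u ≠ v)
    (hlen : 2 ≤ p.length ∨ 2 ≤ q.length)
    (hmeet : ∀ x ∈ p.support, x ∈ q.support → x = u ∨ x = v) :
    (p.append q).IsCycle := by
  cases p with
  | nil => exact absurd rfl hne
  | @cons _ b _ h p' =>
    rw [Walk.cons_append, Walk.cons_isCycle_iff]
    have hp'p : p'.IsPath := hp.of_cons
    have hanp : u ∉ p'.support := ((Walk.cons_isPath_iff h p').mp hp).2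
    constructor
    · refine append_isPath' hp'p hq ?_
      intro x hxp hxq
      rcases hmeet x (by rw [Walk.support_cons]; exact List.mem_cons_of_mem _ hxp) hxq with
        rfl | rfl
      · exact absurd hxp hanp
      · rfl
    · intro hmem
      rw [Walk.edges_append, List.mem_append] at hmem
      rcases hmem with hmem | hmem
      · exact hanp (p'.fst_mem_support_of_mem_edges hmem)
      · have hbq : b ∈ q.support := q.snd_mem_support_of_mem_edges hmem
        have hbp : b ∈ (Walk.cons h p').support := by
          rw [Walk.support_cons]
          exact List.mem_cons_of_mem _ p'.start_mem_support
        rcases hmeet b hbp hbq with rfl | rfl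
        · exact h.ne rfl
        · -- b = v, so p' : Walk b b is a path, hence nil, so p has length 1
          have hp'nil : p'.length = 0 := by
            cases p' with
            | nil => rfl
            | cons h' r =>
              exfalso
              have : b ∈ r.support := r.end_mem_support
              exact ((Walk.cons_isPath_iff h' r).mp hp'p).2 this
          have hq2 : 2 ≤ q.length := by
            rcases hlen with hl | hl
            · simp [hp'nil] at hl
            · exact hl
          have : q.length = 1 := length_eq_one_of_mem_edges hq (by rwa [Sym2.eq_swap])
          omega

lemma path_split_meet {u v r : V} {p : G.Walk u v} (hp : p.IsPath) (h : r ∈ p.support)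
    {x : V} (hx1 : x ∈ (p.takeUntil r h).support) (hx2 : x ∈ (p.dropUntil r h).support) :
    x = r := by
  have hsupp : p.support = (p.takeUntil r h).support ++ (p.dropUntil r h).support.tail := by
    conv_lhs => rw [← p.take_spec h]
    exact Walk.support_append _ _
  have hnd := hp.support_nodup
  rw [hsupp, List.nodup_append] at hnd
  rw [(p.dropUntil r h).support_eq_cons, List.mem_cons] at hx2
  rcases hx2 with rfl | hx2
  · rfl
  · exact (hnd.2.2 x hx1 x hx2 rfl).elim

lemma cycle_split {a b : V} {c : G.Walk a a} (hc : c.IsCycle) (h : b ∈ c.support)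
    (hb : b ≠ a) : (c.takeUntil b h).IsPath ∧ (c.dropUntil b h).IsPath := by
  have hsupp : c.support = (c.takeUntil b h).support ++ (c.dropUntil b h).support.tail := by
    conv_lhs => rw [← c.take_spec h]
    exact Walk.support_append _ _
  have h1 : (c.takeUntil b h).support = a :: (c.takeUntil b h).support.tail :=
    (c.takeUntil b h).support_eq_cons
  have h2 : (c.dropUntil b h).support = b :: (c.dropUntil b h).support.tail :=
    (c.dropUntil b h).support_eq_cons
  have htail : c.support.tail =
      (c.takeUntil b h).support.tail ++ (c.dropUntil b h).support.tail := by
    rw [h1] at hsupp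
    rw [hsupp]
    rfl
  have hnd := hc.support_nodup
  rw [htail, List.nodup_append] at hnd
  obtain ⟨hT, hD, hdisj⟩ := hnd
  constructor
  · rw [Walk.isPath_def, h1, List.nodup_cons]
    refine ⟨fun haT => ?_, hT⟩
    have haD : a ∈ (c.dropUntil b h).support.tail := by
      have := (c.dropUntil b h).end_mem_support
      rw [h2, List.mem_cons] at this
      rcases this with h' | h'
      · exact absurd h'.symm hb
      · exact h'
    exact hdisj a haT a haD rfl
  · rw [Walk.isPath_def, h2, List.nodup_cons]
    refine ⟨fun hbD => ?_, hD⟩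
    have hbT : b ∈ (c.takeUntil b h).support.tail := by
      have := (c.takeUntil b h).end_mem_support
      rw [h1, List.mem_cons] at this
      rcases this with h' | h'
      · exact absurd h' hb
      · exact h'
    exact hdisj b hbT b hbD rfl

lemma mem_support_closed_iff_tail {a x : V} {c : G.Walk a a} (hc : c ≠ Walk.nil) :
    x ∈ c.support ↔ x ∈ c.support.tail := by
  constructor
  · intro hx
    rw [c.support_eq_cons, List.mem_cons] at hx
    rcases hx with rfl | hx
    · cases c with
      | nil => exact absurd rfl hc
      | cons h p => simpa using p.end_mem_support
    · exact hx
  · exact fun hx => List.mem_of_mem_tail hx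

lemma mem_rotate {a b x : V} {c : G.Walk a a} (hc : c.IsCycle) (h : b ∈ c.support) :
    x ∈ (c.rotate _ h).support ↔ x ∈ c.support := by
  rw [mem_support_closed_iff_tail (hc.rotate h).ne_nil, mem_support_closed_iff_tail hc.ne_nil]
  exact (c.support_rotate _ h).mem_iff

lemma exists_path_in_set {s : Set V} (hc : (G.induce s).Connected) {a b : V}
    (ha : a ∈ s) (hb : b ∈ s) :
    ∃ p : G.Walk a b, p.IsPath ∧ ∀ x ∈ p.support, x ∈ s := by
  obtain ⟨w⟩ := hc.preconnected ⟨a, ha⟩ ⟨b, hb⟩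
  let f : G.induce s →g G := ⟨Subtype.val, fun {x y} h => h⟩
  refine ⟨(w.map f).bypass, Walk.bypass_isPath _, fun x hx => ?_⟩
  have hmem := (w.map f).support_bypass_subset hx
  rw [Walk.support_map, List.mem_map] at hmem
  obtain ⟨y, -, rfl⟩ := hmem
  exact y.2

lemma exists_cross {S : Set V} {u v' : V} (p : G.Walk u v') (hu : u ∈ S) (hv : v' ∉ S) :
    ∃ a b, G.Adj a b ∧ a ∈ S ∧ b ∉ S ∧ a ∈ p.support ∧ b ∈ p.support := by
  induction p with
  | nil => exact absurd hu hv
  | @cons a b c h p ih =>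
    by_cases hb : b ∈ S
    · obtain ⟨a', b', h', ha', hb', has, hbs⟩ := ih hb hv
      exact ⟨a', b', h', ha', hb', by simp [has], by simp [hbs]⟩
    · refine ⟨a, b, h, hu, hb, by simp, ?_⟩
      rw [Walk.support_cons]
      exact List.mem_cons_of_mem _ p.start_mem_support

lemma mem_support_of_circVerts {u v' : V} {w : G.Walk u v'} {t : V}
    (h : t ∈ circVerts {e | e ∈ w.edges}) : t ∈ w.support := by
  obtain ⟨e, he, hte⟩ := h
  revert hte
  induction e using Sym2.ind with
  | _ p q =>
    intro hte
    rcases Sym2.mem_iff.mp hte with rfl | rfl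
    · exact w.fst_mem_support_of_mem_edges he
    · exact w.snd_mem_support_of_mem_edges he

lemma mem_circVerts_of_support {u v' : V} {w : G.Walk u v'} {t : V} (hl : w.length ≠ 0)
    (h : t ∈ w.support) : t ∈ circVerts {e | e ∈ w.edges} := by
  obtain ⟨e, he, hte⟩ := exists_edge_of_mem_support w h hl
  exact ⟨e, he, hte⟩

lemma exists_path_avoiding {W : Type*} [DecidableEq W] {H : SimpleGraph W}
    (hdel : ∀ x : W, (H.induce {x}ᶜ).Connected)
    {a b t : W} (ha : a ≠ t) (hb : b ≠ t) :
    ∃ p : H.Walk a b, p.IsPath ∧ t ∉ p.support := by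
  obtain ⟨p, hp, hps⟩ := exists_path_in_set (hdel t)
    (by simpa using ha) (by simpa using hb)
  exact ⟨p, hp, fun hm => by simpa using hps t hm⟩

lemma exists_cycle_through_pair {W : Type u} [DecidableEq W] {H : SimpleGraph W}
    (hH : TwoConnected H) {x y : W} (hxy : x ≠ y) :
    ∃ (v : W) (c : H.Walk v v), c.IsCycle ∧ x ∈ c.support ∧ y ∈ c.support := by
  obtain ⟨hconn, hcard, hdel⟩ := hH
  suffices key : ∀ k : ℕ, ∀ x y : W, x ≠ y → H.dist x y = k →
      ∃ (v : W) (c : H.Walk v v), c.IsCycle ∧ x ∈ c.support ∧ y ∈ c.support by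
    exact key (H.dist x y) x y hxy rfl
  intro k
  induction k using Nat.strong_induction_on with
  | _ k ih =>
    intro x y hxy hdist
    have hk0 : k ≠ 0 := by
      intro h
      exact hxy ((hconn.dist_eq_zero_iff).mp (h ▸ hdist))
    rcases Nat.lt_or_ge k 2 with hk2 | hk2
    · -- k = 1 : x and y adjacent
      have hk1 : k = 1 := by omega
      subst hk1
      have hadjxy : H.Adj x y := by
        obtain ⟨p, hp⟩ := (hconn.preconnected x y).exists_walk_length_eq_dist
        rw [hdist] at hp
        cases p with
        | nil => simp at hp
        | cons h q =>
          cases q with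
          | nil => exact h
          | cons h' q' => simp [Walk.length_cons] at hp
      -- a path from x, avoiding y, to some third vertex u
      obtain ⟨u, hux, huy⟩ := Cardinal.three_le hcard x y
      obtain ⟨p₀, hp₀, hp₀s⟩ := exists_path_avoiding hdel hxy huy
      cases p₀ with
      | nil => exact absurd rfl (Ne.symm hux)
      | @cons _ z _ hxz q₀ =>
        have hzy : z ≠ y := by
          intro h
          apply hp₀s
          rw [Walk.support_cons, ← h]
          exact List.mem_cons_of_mem _ q₀.start_mem_support
        have hzx : z ≠ x := hxz.ne'
        obtain ⟨R, hR, hRx⟩ := exists_path_avoiding hdel hzx (Ne.symm hxy)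
        refine ⟨x, Walk.cons hxz (R.append (Walk.cons hadjxy.symm Walk.nil)), ?_, ?_, ?_⟩
        · rw [Walk.cons_isCycle_iff]
          constructor
          · refine append_isPath' hR ?_ ?_
            · rw [Walk.cons_isPath_iff]
              exact ⟨Walk.IsPath.nil, by simpa using Ne.symm hxy⟩
            · intro t ht1 ht2
              simp only [Walk.support_cons, Walk.support_nil, List.mem_cons,
                List.mem_singleton, List.not_mem_nil, or_false] at ht2
              rcases ht2 with rfl | rfl
              · rfl
              · exact absurd ht1 hRx
          · intro hmem
            rw [Walk.edges_append, List.mem_append] at hmem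
            rcases hmem with hm | hm
            · exact hRx (R.fst_mem_support_of_mem_edges hm)
            · simp only [Walk.edges_cons, Walk.edges_nil, List.mem_singleton] at hm
              rw [Sym2.eq_iff] at hm
              rcases hm with ⟨rfl, -⟩ | ⟨-, rfl⟩
              · exact hxy rfl
              · exact hzy rfl
        · exact Walk.start_mem_support _
        · rw [Walk.support_cons]
          apply List.mem_cons_of_mem
          rw [Walk.mem_support_append_iff]
          exact Or.inl R.end_mem_support
    · -- k ≥ 2 : induction step
      have hyx : H.dist y x = k := by rw [SimpleGraph.dist_comm]; exact hdist
      obtain ⟨p, hp⟩ := (hconn.preconnected y x).exists_walk_length_eq_dist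
      rw [hyx] at hp
      cases p with
      | nil => rw [Walk.length_nil] at hp; omega
      | @cons _ w _ h q =>
        rw [Walk.length_cons] at hp
        have hq_len : q.length = k - 1 := by omega
        have hdxw : H.dist x w = k - 1 := by
          have h1 : H.dist x w ≤ k - 1 := by
            have := SimpleGraph.dist_le q.reverse
            rwa [Walk.length_reverse, hq_len] at this
          have h2 : H.dist w y ≤ 1 := by
            have := SimpleGraph.dist_le (Walk.cons h.symm Walk.nil)
            simpa using this
          have h3 := hconn.dist_triangle (u := x) (v := w) (w := y)
          rw [hdist] at h3
          omega
        have hwx : w ≠ x := by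
          intro h'
          rw [h', SimpleGraph.dist_self] at hdxw
          omega
        obtain ⟨v0, c0, hc0, hx0, hw0⟩ := ih (k-1) (by omega) x w (Ne.symm hwx) hdxw
        by_cases hy0 : y ∈ c0.support
        · exact ⟨v0, c0, hc0, hx0, hy0⟩
        · have hyw : y ≠ w := h.ne
          obtain ⟨R, hR, hwR⟩ := exists_path_avoiding hdel hwx.symm hyw
          -- R : x → y path avoiding w; find last vertex z' of R on c0
          obtain ⟨z', hz'S, q', hq', hq'sub, hq'meet⟩ :=
            exists_first_hit R.reverse hR.reverse {t | t ∈ c0.support} hx0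
          have hR₂ : q'.reverse.IsPath := hq'.reverse
          have hR₂sub : ∀ t ∈ q'.reverse.support, t ∈ R.support := by
            intro t ht
            rw [Walk.support_reverse, List.mem_reverse] at ht
            have := hq'sub t ht
            rwa [Walk.support_reverse, List.mem_reverse] at this
          have hR₂meet : ∀ t ∈ q'.reverse.support, t ∈ c0.support → t = z' := by
            intro t ht
            rw [Walk.support_reverse, List.mem_reverse] at ht
            exact hq'meet t ht
          have hz'c : z' ∈ c0.support := hz'S
          have hz'w : w ≠ z' := by
            intro h'
            exact hwR (hR₂sub w (h' ▸ q'.reverse.start_mem_support))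
          have hc' : (c0.rotate _ hz'c).IsCycle := hc0.rotate hz'c
          have hmemc' : ∀ t : W, t ∈ (c0.rotate _ hz'c).support ↔ t ∈ c0.support :=
            fun t => mem_rotate hc0 hz'c
          have hwc' : w ∈ (c0.rotate _ hz'c).support := (hmemc' w).2 hw0
          have hsplit := cycle_split hc' hwc' hz'w
          have hxc' : x ∈ (c0.rotate _ hz'c).support := (hmemc' x).2 hx0
          have hcov : x ∈ ((c0.rotate _ hz'c).takeUntil w hwc').support ∨
              x ∈ ((c0.rotate _ hz'c).dropUntil w hwc').support := by
            have hs : (c0.rotate _ hz'c).support =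
                ((c0.rotate _ hz'c).takeUntil w hwc').support ++
                ((c0.rotate _ hz'c).dropUntil w hwc').support.tail := by
              conv_lhs => rw [← (c0.rotate _ hz'c).take_spec hwc']
              exact Walk.support_append _ _
            rw [hs, List.mem_append] at hxc'
            rcases hxc' with h1 | h1
            · exact Or.inl h1
            · exact Or.inr (List.mem_of_mem_tail h1)
          obtain ⟨arc, harc_path, harc_sub, hx_arc⟩ :
              ∃ arc : H.Walk w z', arc.IsPath ∧ (∀ t ∈ arc.support, t ∈ c0.support) ∧
                x ∈ arc.support := by
            rcases hcov with h1 | h1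
            · refine ⟨((c0.rotate _ hz'c).takeUntil w hwc').reverse, hsplit.1.reverse, ?_, ?_⟩
              · intro t ht
                rw [Walk.support_reverse, List.mem_reverse] at ht
                exact (hmemc' t).1 ((c0.rotate _ hz'c).support_takeUntil_subset hwc' ht)
              · rwa [Walk.support_reverse, List.mem_reverse]
            · refine ⟨(c0.rotate _ hz'c).dropUntil w hwc', hsplit.2, ?_, h1⟩
              intro t ht
              exact (hmemc' t).1 ((c0.rotate _ hz'c).support_dropUntil_subset hwc' ht)
          refine ⟨y, Walk.cons h (arc.append q'.reverse), ?_, ?_, Walk.start_mem_support _⟩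
          · rw [Walk.cons_isCycle_iff]
            constructor
            · exact append_isPath' harc_path hR₂
                (fun t ht1 ht2 => hR₂meet t ht2 (harc_sub t ht1))
            · intro hmem
              rw [Walk.edges_append, List.mem_append] at hmem
              rcases hmem with hm | hm
              · exact hy0 (harc_sub y (arc.fst_mem_support_of_mem_edges hm))
              · exact hwR (hR₂sub w (q'.reverse.snd_mem_support_of_mem_edges hm))
          · rw [Walk.support_cons]
            apply List.mem_cons_of_mem
            rw [Walk.mem_support_append_iff]
            exact Or.inl hx_arc

lemma typeX_side {W : Type u} [DecidableEq W] {H : SimpleGraph W} (hH : TwoConnected H)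
    {x y z : W} (hxy : x ≠ y) (hxz : x ≠ z) (hyz : y ≠ z) :
    ∃ (v : W) (c : H.Walk v v), c.IsCycle ∧ x ∈ c.support ∧ y ∈ c.support ∧
      ∃ w, w ∈ c.support ∧ w ≠ x ∧ w ≠ y ∧ ∃ q : H.Walk z w, q.IsPath ∧
        (∀ t ∈ q.support, t ∈ c.support → t = w) := by
  obtain ⟨v0, c, hc, hxc, hyc⟩ := exists_cycle_through_pair hH hxy
  by_cases hzc : z ∈ c.support
  · exact ⟨v0, c, hc, hxc, hyc, z, hzc, Ne.symm hxz, Ne.symm hyz, Walk.nil,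
      Walk.IsPath.nil, by simp⟩
  obtain ⟨hconn, hcard, hdel⟩ := hH
  -- R : z → y path avoiding x
  obtain ⟨R, hR, hxR⟩ := exists_path_avoiding hdel (Ne.symm hxz) (Ne.symm hxy)
  obtain ⟨w₀, hw₀c, Q₀, hQ₀, hQ₀sub, hQ₀meet⟩ :=
    exists_first_hit R hR {t | t ∈ c.support} hyc
  by_cases hw₀y : w₀ = y
  case neg =>
    refine ⟨v0, c, hc, hxc, hyc, w₀, hw₀c, ?_, hw₀y, Q₀, hQ₀, hQ₀meet⟩
    intro h
    exact hxR (hQ₀sub x (h ▸ Q₀.end_mem_support))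
  case pos =>
  subst hw₀y
  -- Q₀ : z → y with interior avoiding c, avoiding x
  obtain ⟨R', hR', hyR'⟩ := exists_path_avoiding hdel (Ne.symm hyz) (Ne.symm hxy).symm
  -- R' : z → x avoiding y ; last vertex r of R' on Q₀
  obtain ⟨r, hrQ, q₀, hq₀, hq₀sub, hq₀meet⟩ :=
    exists_first_hit R'.reverse hR'.reverse {t | t ∈ Q₀.support} Q₀.start_mem_support
  obtain ⟨w₁, hw₁c, Q₁, hQ₁, hQ₁sub, hQ₁meet⟩ :=
    exists_first_hit q₀.reverse hq₀.reverse {t | t ∈ c.support} hxc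
  have hQ₁subR' : ∀ t ∈ Q₁.support, t ∈ R'.support := by
    intro t ht
    have h1 := hQ₁sub t ht
    rw [Walk.support_reverse, List.mem_reverse] at h1
    have h2 := hq₀sub t h1
    rwa [Walk.support_reverse, List.mem_reverse] at h2
  have hQ₁Qy : ∀ t ∈ Q₁.support, t ∈ Q₀.support → t = r := by
    intro t ht htQ
    have h1 := hQ₁sub t ht
    rw [Walk.support_reverse, List.mem_reverse] at h1
    exact hq₀meet t h1 htQ
  have hry : r ≠ w₀ := by
    intro h
    apply hyR'
    have := q₀.end_mem_support
    have h2 := hq₀sub r this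
    rw [Walk.support_reverse, List.mem_reverse] at h2
    rwa [h] at h2
  have hrc : r ∉ c.support := fun hm => hry (hQ₀meet r hrQ hm)
  have hrx : r ≠ x := fun h => hrc (h ▸ hxc)
  have hw₁y : w₁ ≠ w₀ := fun h => hyR' (h ▸ hQ₁subR' w₁ Q₁.end_mem_support)
  by_cases hw₁x : w₁ = x
  case neg =>
    refine ⟨v0, c, hc, hxc, hyc, w₁, hw₁c, hw₁x, hw₁y,
      (Q₀.takeUntil r hrQ).append Q₁, ?_, ?_⟩
    · exact append_isPath' (hQ₀.takeUntil hrQ) hQ₁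
        (fun t ht1 ht2 => hQ₁Qy t ht2 (Q₀.support_takeUntil_subset hrQ ht1))
    · intro t ht htc
      rw [Walk.mem_support_append_iff] at ht
      rcases ht with ht | ht
      · exfalso
        have hty : t = w₀ := hQ₀meet t (Q₀.support_takeUntil_subset hrQ ht) htc
        subst hty
        exact hry (path_split_meet hQ₀ hrQ ht ((Q₀.dropUntil r hrQ).end_mem_support)).symm
      · exact hQ₁meet t ht htc
  case pos =>
  subst hw₁x
  -- rerouting: build a new cycle through x, y and r
  have hycy : w₀ ∈ c.support := hyc
  have hcy_cyc : (c.rotate _ hycy).IsCycle := hc.rotate hycy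
  have hxcy : w₁ ∈ (c.rotate _ hycy).support := (mem_rotate hc hycy).2 hxc
  have hsplit := cycle_split hcy_cyc hxcy hxy
  have ht₂sub : ∀ t ∈ ((c.rotate _ hycy).takeUntil w₁ hxcy).support, t ∈ c.support :=
    fun t ht => (mem_rotate hc hycy).1 ((c.rotate _ hycy).support_takeUntil_subset hxcy ht)
  have hβpath : (Q₀.dropUntil r hrQ).IsPath := hQ₀.dropUntil hrQ
  have hβsub : ∀ t ∈ (Q₀.dropUntil r hrQ).support, t ∈ Q₀.support :=
    Q₀.support_dropUntil_subset hrQ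
  have hqq : (((c.rotate _ hycy).takeUntil w₁ hxcy).append Q₁.reverse).IsPath := by
    refine append_isPath' hsplit.1 hQ₁.reverse ?_
    intro t ht1 ht2
    rw [Walk.support_reverse, List.mem_reverse] at ht2
    exact hQ₁meet t ht2 (ht₂sub t ht1)
  have hlen2 : 2 ≤ (((c.rotate _ hycy).takeUntil w₁ hxcy).append Q₁.reverse).length := by
    rw [Walk.length_append]
    have l1 : ((c.rotate _ hycy).takeUntil w₁ hxcy).length ≠ 0 := by
      intro h0
      exact hxy (Walk.eq_of_length_eq_zero h0).symm
    have l2 : Q₁.reverse.length ≠ 0 := by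
      rw [Walk.length_reverse]
      intro h0
      exact hrc ((Walk.eq_of_length_eq_zero h0) ▸ hxc)
    omega
  have hC'cyc : ((Q₀.dropUntil r hrQ).append
      (((c.rotate _ hycy).takeUntil w₁ hxcy).append Q₁.reverse)).IsCycle := by
    refine isCycle_append hβpath hqq hry (Or.inr hlen2) ?_
    intro t ht1 ht2
    rw [Walk.mem_support_append_iff] at ht2
    rcases ht2 with ht2 | ht2
    · exact Or.inr (hQ₀meet t (hβsub t ht1) (ht₂sub t ht2))
    · rw [Walk.support_reverse, List.mem_reverse] at ht2
      exact Or.inl (hQ₁Qy t ht2 (hβsub t ht1))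
  refine ⟨r, _, hC'cyc, ?_, ?_, r, Walk.start_mem_support _, hrx, hry,
    Q₀.takeUntil r hrQ, hQ₀.takeUntil hrQ, ?_⟩
  · rw [Walk.mem_support_append_iff, Walk.mem_support_append_iff]
    exact Or.inr (Or.inl ((c.rotate _ hycy).takeUntil w₁ hxcy).end_mem_support)
  · rw [Walk.mem_support_append_iff]
    exact Or.inl (Q₀.dropUntil r hrQ).end_mem_support
  · intro t ht htC
    rw [Walk.mem_support_append_iff] at htC
    rcases htC with htβ | htr
    · exact path_split_meet hQ₀ hrQ ht htβ
    · rw [Walk.mem_support_append_iff] at htr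
      rcases htr with ht₂' | htQ₁
      · have hty : t = w₀ := hQ₀meet t (Q₀.support_takeUntil_subset hrQ ht) (ht₂sub t ht₂')
        subst hty
        exact path_split_meet hQ₀ hrQ ht ((Q₀.dropUntil r hrQ).end_mem_support)
      · rw [Walk.support_reverse, List.mem_reverse] at htQ₁
        exact hQ₁Qy t htQ₁ (Q₀.support_takeUntil_subset hrQ ht)

end StatementSeven

end Helpers

/-- If moreover both components of `G − A` are 2-connected, then
`G` contains a type-X subgraph with three connectors from `A`. -/
theorem statement7 {V : Type u} (G : SimpleGraph V) (h3 : ThreeConnected G)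
    (A : Set (Sym2 V)) (hA : A ⊆ G.edgeSet) (hInd : IndepEdges A)
    (c₁ c₂ : (G.deleteEdges A).ConnectedComponent) (hne : c₁ ≠ c₂)
    (hall : ∀ c : (G.deleteEdges A).ConnectedComponent, c = c₁ ∨ c = c₂)
    (hcross : ∀ x y : V, s(x, y) ∈ A →
      (G.deleteEdges A).connectedComponentMk x ≠ (G.deleteEdges A).connectedComponentMk y)
    (h2c₁ : TwoConnected ((G.deleteEdges A).induce c₁.supp))
    (h2c₂ : TwoConnected ((G.deleteEdges A).induce c₂.supp)) :
    ∃ e₁ ∈ A, ∃ e₂ ∈ A, ∃ e₃ ∈ A, IsTypeXWith G e₁ e₂ e₃ := by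
  classical
  set V₁ : Set V := c₁.supp with hV₁def
  set V₂ : Set V := c₂.supp with hV₂def
  have horient : ∀ e ∈ A, ∃ a b, e = s(a, b) ∧ a ∈ V₁ ∧ b ∈ V₂ := by
    intro e he
    revert he
    induction e using Sym2.ind with
    | _ a b =>
      intro he
      have hab := hcross a b he
      rcases hall ((G.deleteEdges A).connectedComponentMk a) with h1 | h1
      · have h2 : (G.deleteEdges A).connectedComponentMk b = c₂ := by
          rcases hall ((G.deleteEdges A).connectedComponentMk b) with h2 | h2
          · exact absurd (h1.trans h2.symm) hab
          · exact h2
        exact ⟨a, b, rfl, (c₁.mem_supp_iff a).2 h1, (c₂.mem_supp_iff b).2 h2⟩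
      · have h2 : (G.deleteEdges A).connectedComponentMk b = c₁ := by
          rcases hall ((G.deleteEdges A).connectedComponentMk b) with h2 | h2
          · exact h2
          · exact absurd (h1.trans h2.symm) hab
        exact ⟨b, a, Sym2.eq_swap, (c₁.mem_supp_iff b).2 h2, (c₂.mem_supp_iff a).2 h1⟩
  have hdisj12 : ∀ t, t ∈ V₁ → t ∈ V₂ → False := by
    intro t h1 h2
    rw [hV₁def, c₁.mem_supp_iff] at h1
    rw [hV₂def, c₂.mem_supp_iff] at h2
    exact hne (h1.symm.trans h2)
  have hedgeA : ∀ a b, G.Adj a b → a ∈ V₁ → b ∉ V₁ → s(a, b) ∈ A := by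
    intro a b hab h1 h2
    by_contra hnA
    have hadj' : (G.deleteEdges A).Adj a b := by
      rw [SimpleGraph.deleteEdges_adj]
      exact ⟨hab, hnA⟩
    have hcc : (G.deleteEdges A).connectedComponentMk a = (G.deleteEdges A).connectedComponentMk b :=
      ConnectedComponent.sound hadj'.reachable
    rw [hV₁def, c₁.mem_supp_iff] at h1
    exact h2 ((c₁.mem_supp_iff b).2 (hcc.symm.trans h1))
  have hthree : ∃ e₁ ∈ A, ∃ e₂ ∈ A, ∃ e₃ ∈ A, e₁ ≠ e₂ ∧ e₁ ≠ e₃ ∧ e₂ ≠ e₃ := by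
    by_contra hcon
    push_neg at hcon
    obtain ⟨u₀, hu₀⟩ := c₁.exists_rep
    have hu₀1 : u₀ ∈ V₁ := (c₁.mem_supp_iff u₀).2 hu₀
    obtain ⟨v₀, hv₀⟩ := c₂.exists_rep
    have hv₀2 : v₀ ∈ V₂ := (c₂.mem_supp_iff v₀).2 hv₀
    have hxy : ∃ x y, x ∈ V₁ ∧ y ∈ V₁ ∧
        ∀ e ∈ A, ∀ a b : V, e = s(a, b) → a ∈ V₁ → a = x ∨ a = y := by
      by_cases hA1 : ∃ f, f ∈ A
      · obtain ⟨f, hf⟩ := hA1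
        obtain ⟨fa, fb, hfe, hfa, hfb⟩ := horient f hf
        by_cases hA2 : ∃ g ∈ A, g ≠ f
        · obtain ⟨g, hg, hgf⟩ := hA2
          obtain ⟨ga, gb, hge, hga, hgb⟩ := horient g hg
          refine ⟨fa, ga, hfa, hga, ?_⟩
          intro e he a b hee ha
          have hef : e = f ∨ e = g := by
            by_contra hcon2
            push_neg at hcon2
            exact hcon2.2 (hcon f hf g hg e he (Ne.symm hgf) (Ne.symm hcon2.1)).symm
          rcases hef with rfl | rfl
          · rw [hfe, Sym2.eq_iff] at hee
            rcases hee with ⟨rfl, -⟩ | ⟨-, rfl⟩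
            · exact Or.inl rfl
            · exact absurd (hdisj12 _ ha hfb) not_false
          · rw [hge, Sym2.eq_iff] at hee
            rcases hee with ⟨rfl, -⟩ | ⟨-, rfl⟩
            · exact Or.inr rfl
            · exact absurd (hdisj12 _ ha hgb) not_false
        · push_neg at hA2
          refine ⟨fa, fa, hfa, hfa, ?_⟩
          intro e he a b hee ha
          have hef : e = f := hA2 e he
          subst hef
          rw [hfe, Sym2.eq_iff] at hee
          rcases hee with ⟨rfl, -⟩ | ⟨-, rfl⟩
          · exact Or.inl rfl
          · exact absurd (hdisj12 _ ha hfb) not_false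
      · push_neg at hA1
        exact ⟨u₀, u₀, hu₀1, hu₀1, fun e he => absurd he (hA1 e)⟩
    obtain ⟨x, y, hx1, hy1, hcover⟩ := hxy
    have hcard1 : (3 : Cardinal) ≤ Cardinal.mk ↥V₁ := h2c₁.2.1
    obtain ⟨zz, hz1, hz2⟩ := Cardinal.three_le hcard1 ⟨x, hx1⟩ ⟨y, hy1⟩
    have hzx : (zz : V) ≠ x := fun h => hz1 (Subtype.ext h)
    have hzy : (zz : V) ≠ y := fun h => hz2 (Subtype.ext h)
    have hv₀x : v₀ ≠ x := fun h => hdisj12 v₀ (h ▸ hx1) hv₀2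
    have hv₀y : v₀ ≠ y := fun h => hdisj12 v₀ (h ▸ hy1) hv₀2
    obtain ⟨p, hp, hps⟩ := StatementSeven.exists_path_in_set (h3.2 x y)
      (show (zz : V) ∈ ({x, y} : Set V)ᶜ by simp [hzx, hzy])
      (show v₀ ∈ ({x, y} : Set V)ᶜ by simp [hv₀x, hv₀y])
    have hz1' : (zz : V) ∈ V₁ := zz.2
    have hv₀1 : v₀ ∉ V₁ := fun h => hdisj12 v₀ h hv₀2
    obtain ⟨a, b, hab, haV, hbV, haS, hbS⟩ := StatementSeven.exists_cross p hz1' hv₀1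
    have heA : s(a, b) ∈ A := hedgeA a b hab haV hbV
    have haxy := hps a haS
    rcases hcover _ heA a b rfl haV with rfl | rfl
    · simp at haxy
    · simp at haxy
  obtain ⟨e₁, he₁, e₂, he₂, e₃, he₃, h12, h13, h23⟩ := hthree
  obtain ⟨a₁, b₁, he₁e, ha₁, hb₁⟩ := horient e₁ he₁
  obtain ⟨a₂, b₂, he₂e, ha₂, hb₂⟩ := horient e₂ he₂
  obtain ⟨a₃, b₃, he₃e, ha₃, hb₃⟩ := horient e₃ he₃
  have hnemem : ∀ {e f : Sym2 V} {p q r t : V}, e ∈ A → f ∈ A → e ≠ f →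
      e = s(p, q) → f = s(r, t) → p ≠ r := by
    intro e f p q r t he hf hef hee hfe h
    subst h
    exact hInd e he f hf hef p (hee ▸ Sym2.mem_mk_left p q) (hfe ▸ Sym2.mem_mk_left p t)
  have ha12 : a₁ ≠ a₂ := hnemem he₁ he₂ h12 he₁e he₂e
  have ha13 : a₁ ≠ a₃ := hnemem he₁ he₃ h13 he₁e he₃e
  have ha23 : a₂ ≠ a₃ := hnemem he₂ he₃ h23 he₂e he₃e
  have hb12 : b₁ ≠ b₂ := hnemem he₁ he₂ h12 (he₁e.trans Sym2.eq_swap) (he₂e.trans Sym2.eq_swap)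
  have hb13 : b₁ ≠ b₃ := hnemem he₁ he₃ h13 (he₁e.trans Sym2.eq_swap) (he₃e.trans Sym2.eq_swap)
  have hb23 : b₂ ≠ b₃ := hnemem he₂ he₃ h23 (he₂e.trans Sym2.eq_swap) (he₃e.trans Sym2.eq_swap)
  -- apply the side lemma on each side
  obtain ⟨v1, cyc1, hcyc1, hA1c, hA2c, w1, hw1c, hw1x, hw1y, q1, hq1, hq1meet⟩ :=
    StatementSeven.typeX_side h2c₁ (x := ⟨a₁, ha₁⟩) (y := ⟨a₂, ha₂⟩) (z := ⟨a₃, ha₃⟩)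
      (fun h => ha12 (congrArg Subtype.val h))
      (fun h => ha13 (congrArg Subtype.val h))
      (fun h => ha23 (congrArg Subtype.val h))
  obtain ⟨v2, cyc2, hcyc2, hB1c, hB2c, w2, hw2c, hw2x, hw2y, q2, hq2, hq2meet⟩ :=
    StatementSeven.typeX_side h2c₂ (x := ⟨b₁, hb₁⟩) (y := ⟨b₂, hb₂⟩) (z := ⟨b₃, hb₃⟩)
      (fun h => hb12 (congrArg Subtype.val h))
      (fun h => hb13 (congrArg Subtype.val h))
      (fun h => hb23 (congrArg Subtype.val h))
  -- homomorphisms into G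
  let φ₁ : ((G.deleteEdges A).induce V₁) →g G :=
    ⟨Subtype.val, fun {p q} h => ((SimpleGraph.deleteEdges_adj).mp h).1⟩
  let φ₂ : ((G.deleteEdges A).induce V₂) →g G :=
    ⟨Subtype.val, fun {p q} h => ((SimpleGraph.deleteEdges_adj).mp h).1⟩
  have hφ₁inj : Function.Injective (φ₁ : ↥V₁ → V) := Subtype.val_injective
  have hφ₂inj : Function.Injective (φ₂ : ↥V₂ → V) := Subtype.val_injective
  set C1 : G.Walk ↑v1 ↑v1 := cyc1.map φ₁ with hC1def
  set C2 : G.Walk ↑v2 ↑v2 := cyc2.map φ₂ with hC2def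
  have hC1cyc : C1.IsCycle := (Walk.map_isCycle_iff_of_injective hφ₁inj).mpr hcyc1
  have hC2cyc : C2.IsCycle := (Walk.map_isCycle_iff_of_injective hφ₂inj).mpr hcyc2
  have hC1len : C1.length ≠ 0 := by
    rw [hC1def, Walk.length_map]
    intro h0
    exact hcyc1.not_nil (Walk.nil_iff_length_eq.mpr h0)
  have hC2len : C2.length ≠ 0 := by
    rw [hC2def, Walk.length_map]
    intro h0
    exact hcyc2.not_nil (Walk.nil_iff_length_eq.mpr h0)
  have hC1mem : ∀ s : ↥V₁, s ∈ cyc1.support → (s : V) ∈ C1.support := by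
    intro s hs
    rw [hC1def, Walk.support_map, List.mem_map]
    exact ⟨s, hs, rfl⟩
  have hC2mem : ∀ s : ↥V₂, s ∈ cyc2.support → (s : V) ∈ C2.support := by
    intro s hs
    rw [hC2def, Walk.support_map, List.mem_map]
    exact ⟨s, hs, rfl⟩
  have hC1mem' : ∀ t ∈ C1.support, ∃ s : ↥V₁, s ∈ cyc1.support ∧ (s : V) = t := by
    intro t ht
    rw [hC1def, Walk.support_map, List.mem_map] at ht
    exact ht
  have hC2mem' : ∀ t ∈ C2.support, ∃ s : ↥V₂, s ∈ cyc2.support ∧ (s : V) = t := by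
    intro t ht
    rw [hC2def, Walk.support_map, List.mem_map] at ht
    exact ht
  have hC1V₁ : ∀ t ∈ C1.support, t ∈ V₁ := by
    intro t ht
    obtain ⟨s, -, rfl⟩ := hC1mem' t ht
    exact s.2
  have hC2V₂ : ∀ t ∈ C2.support, t ∈ V₂ := by
    intro t ht
    obtain ⟨s, -, rfl⟩ := hC2mem' t ht
    exact s.2
  -- the connecting path
  have hadj3 : G.Adj a₃ b₃ := (G.mem_edgeSet).1 (he₃e ▸ hA he₃)
  set L : G.Walk ↑w1 a₃ := (q1.map φ₁).reverse with hLdef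
  set Rr : G.Walk a₃ ↑w2 := Walk.cons hadj3 (q2.map φ₂) with hRdef
  have hLpath : L.IsPath := (Walk.map_isPath_of_injective hφ₁inj hq1).reverse
  have hLsub : ∀ t ∈ L.support, ∃ s : ↥V₁, s ∈ q1.support ∧ (s : V) = t := by
    intro t ht
    rw [hLdef, Walk.support_reverse, List.mem_reverse, Walk.support_map, List.mem_map] at ht
    exact ht
  have hRsub : ∀ t ∈ (q2.map φ₂).support, ∃ s : ↥V₂, s ∈ q2.support ∧ (s : V) = t := by
    intro t ht
    rw [Walk.support_map, List.mem_map] at ht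
    exact ht
  have hRpath : Rr.IsPath := by
    rw [hRdef, Walk.cons_isPath_iff]
    refine ⟨Walk.map_isPath_of_injective hφ₂inj hq2, ?_⟩
    intro hmem
    obtain ⟨s, -, hs⟩ := hRsub a₃ hmem
    exact hdisj12 a₃ ha₃ (hs ▸ s.2)
  have hPpath : (L.append Rr).IsPath := by
    refine StatementSeven.append_isPath' hLpath hRpath ?_
    intro t ht1 ht2
    obtain ⟨s, -, rfl⟩ := hLsub t ht1
    rw [hRdef, Walk.support_cons, List.mem_cons] at ht2
    rcases ht2 with h | h
    · exact h
    · obtain ⟨s', -, hs'⟩ := hRsub _ h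
      exact absurd (hdisj12 _ s.2 (hs' ▸ s'.2)) not_false
  refine ⟨e₁, he₁, e₂, he₂, e₃, he₃, a₁, a₂, ↑w1, b₁, b₂, ↑w2,
    {e | e ∈ C1.edges}, {e | e ∈ C2.edges}, L.append Rr,
    ⟨↑v1, C1, hC1cyc, rfl⟩, ⟨↑v2, C2, hC2cyc, rfl⟩, ?_, ?_, ?_, ?_, ?_, ?_, ?_,
    ha12, ?_, ?_, hb12, ?_, ?_,
    (G.mem_edgeSet).1 (he₁e ▸ hA he₁), (G.mem_edgeSet).1 (he₂e ▸ hA he₂),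
    he₁e, he₂e, hPpath, ?_, ?_⟩
  · -- disjointness of circuit vertex sets
    rw [Set.disjoint_left]
    intro t ht1 ht2
    exact hdisj12 t (hC1V₁ t (StatementSeven.mem_support_of_circVerts ht1))
      (hC2V₂ t (StatementSeven.mem_support_of_circVerts ht2))
  · exact StatementSeven.mem_circVerts_of_support hC1len (hC1mem _ hA1c)
  · exact StatementSeven.mem_circVerts_of_support hC1len (hC1mem _ hA2c)
  · exact StatementSeven.mem_circVerts_of_support hC1len (hC1mem _ hw1c)
  · exact StatementSeven.mem_circVerts_of_support hC2len (hC2mem _ hB1c)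
  · exact StatementSeven.mem_circVerts_of_support hC2len (hC2mem _ hB2c)
  · exact StatementSeven.mem_circVerts_of_support hC2len (hC2mem _ hw2c)
  · exact fun h => hw1x (Subtype.ext h.symm)
  · exact fun h => hw1y (Subtype.ext h.symm)
  · exact fun h => hw2x (Subtype.ext h.symm)
  · exact fun h => hw2y (Subtype.ext h.symm)
  · -- interior condition
    intro t htP ht1 ht2 hmem
    rw [Walk.mem_support_append_iff] at htP
    rcases hmem with hCA | hCB
    · have htc : t ∈ C1.support := StatementSeven.mem_support_of_circVerts hCA
      obtain ⟨s', hs'c, rfl⟩ := hC1mem' t htc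
      rcases htP with hL | hR
      · obtain ⟨s, hsq, hss⟩ := hLsub _ hL
        have : s = s' := Subtype.ext hss
        subst this
        exact ht1 (congrArg Subtype.val (hq1meet s hsq hs'c))
      · rw [hRdef, Walk.support_cons, List.mem_cons] at hR
        rcases hR with h | h
        · have hs3 : s' = ⟨a₃, ha₃⟩ := Subtype.ext h
          subst hs3
          exact ht1 (congrArg Subtype.val (hq1meet _ q1.start_mem_support hs'c))
        · obtain ⟨s'', -, hs''⟩ := hRsub _ h
          exact hdisj12 _ s'.2 (hs'' ▸ s''.2)
    · have htc : t ∈ C2.support := StatementSeven.mem_support_of_circVerts hCB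
      obtain ⟨s', hs'c, rfl⟩ := hC2mem' t htc
      rcases htP with hL | hR
      · obtain ⟨s, -, hss⟩ := hLsub _ hL
        exact hdisj12 _ (hss ▸ s.2) s'.2
      · rw [hRdef, Walk.support_cons, List.mem_cons] at hR
        rcases hR with h | h
        · exact hdisj12 _ (h ▸ ha₃) s'.2
        · obtain ⟨s'', hs''q, hs''⟩ := hRsub _ h
          have hmeet2 := hq2meet s'' hs''q (by rwa [show s'' = s' from Subtype.ext hs''])
          exact ht2 (hs''.symm.trans (congrArg Subtype.val hmeet2))
  · -- e₃ is an edge of the path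
    rw [Walk.edges_append, List.mem_append, hRdef, Walk.edges_cons]
    exact Or.inr (he₃e ▸ List.mem_cons_self)
end

section
/- If f is a circuit injection from a graph G onto a graph G' (so G' has no isolated vertices and f is surjective on edges) and G is 3-connected, then G' has no isolated edges: for any two edges e₁', e₂' of G' there is a circuit of G' containing both. -/
open SimpleGraph

universe u v

section Statement12Aux

set_option linter.unusedSectionVars false
set_option linter.unnecessarySimpa false
set_option maxHeartbeats 1000000

namespace St12

variable {V : Type*} [DecidableEq V] {G : SimpleGraph V}

lemma exists_path_in_set {s : Set V} {x y : V} (hx : x ∈ s) (hy : y ∈ s)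
    (h : (G.induce s).Reachable ⟨x, hx⟩ ⟨y, hy⟩) :
    ∃ p : G.Walk x y, p.IsPath ∧ ∀ z ∈ p.support, z ∈ s := by
  obtain ⟨q⟩ := h
  let φ : G.induce s →g G := ⟨Subtype.val, fun h => h⟩
  refine ⟨(q.map φ).bypass, Walk.bypass_isPath _, fun z hz => ?_⟩
  have := Walk.support_bypass_subset _ hz
  rw [Walk.support_map] at this
  obtain ⟨⟨z', hz'⟩, _, rfl⟩ := List.mem_map.mp this
  exact hz'

/-- prefix of a walk up to the first vertex belonging to a set -/
lemma exists_prefix_to_set {x y : V} (R : G.Walk x y) (S : Set V) (hy : y ∈ S) :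
    ∃ (w : V) (_ : w ∈ S) (R' : G.Walk x w), R'.IsPath ∧
      (∀ z ∈ R'.support, z ∈ S → z = w) ∧ (∀ z ∈ R'.support, z ∈ R.support) := by
  induction R with
  | nil =>
    exact ⟨_, hy, Walk.nil, Walk.IsPath.nil,
      by simp +contextual [Walk.support_nil], by simp⟩
  | @cons a b c h R ih =>
    by_cases ha : a ∈ S
    · refine ⟨a, ha, Walk.nil, Walk.IsPath.nil, by simp +contextual [Walk.support_nil],
        by simp⟩
    · obtain ⟨w, hwS, R', hR', hmeet, hsub⟩ := ih hy
      by_cases haR : a ∈ R'.support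
      · refine ⟨w, hwS, R'.dropUntil a haR, hR'.dropUntil haR, ?_, ?_⟩
        · intro z hz hzS
          exact hmeet z (Walk.support_dropUntil_subset _ _ hz) hzS
        · intro z hz
          rw [Walk.support_cons]
          exact List.mem_cons_of_mem _ (hsub z (Walk.support_dropUntil_subset _ _ hz))
      · refine ⟨w, hwS, Walk.cons h R', hR'.cons haR, ?_, ?_⟩
        · intro z hz hzS
          rw [Walk.support_cons] at hz
          rcases List.mem_cons.mp hz with rfl | hz'
          · exact absurd hzS ha
          · exact hmeet z hz' hzS
        · intro z hz
          rw [Walk.support_cons] at hz ⊢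
          rcases List.mem_cons.mp hz with rfl | hz'
          · exact List.mem_cons_self
          · exact List.mem_cons_of_mem _ (hsub z hz')

/-- a path containing the edge between its endpoints has length 1 -/
lemma length_eq_one_of_edge_mem {u v : V} {p : G.Walk u v} (hp : p.IsPath)
    (h : s(u, v) ∈ p.edges) : p.length = 1 := by
  cases p with
  | nil => simp at h
  | @cons _ b _ h' p =>
    rw [Walk.edges_cons, List.mem_cons] at h
    rcases h with h | h
    · rw [Sym2.eq_iff] at h
      rcases h with ⟨-, rfl⟩ | ⟨h1, -⟩
      · have hnil : p = Walk.nil := by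
          rw [← Walk.isPath_iff_eq_nil]
          exact ((Walk.cons_isPath_iff _ _).mp hp).1
        subst hnil; simp
      · exact absurd h1 h'.ne
    · exfalso
      exact ((Walk.cons_isPath_iff _ _).mp hp).2 (Walk.fst_mem_support_of_mem_edges _ h)

lemma end_mem_tail_support {a b : V} {p : G.Walk a b} (hp : ¬ p.Nil) :
    b ∈ p.support.tail := by
  cases p with
  | nil => simp at hp
  | cons h q => simpa using q.end_mem_support

lemma cycle_arcs_isPath {u w : V} {C : G.Walk u u} (hC : C.IsCycle)
    (hw : w ∈ C.support) (hne : w ≠ u) :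
    (C.takeUntil w hw).IsPath ∧ (C.dropUntil w hw).IsPath := by
  have hspec : (C.takeUntil w hw).append (C.dropUntil w hw) = C := Walk.take_spec _ hw
  have hT : C.support.tail.Nodup := hC.support_nodup
  have hsplit : C.support.tail
      = (C.takeUntil w hw).support.tail ++ (C.dropUntil w hw).support.tail := by
    conv_lhs => rw [← hspec]
    rw [Walk.tail_support_append]
  rw [hsplit] at hT
  obtain ⟨h1, h2, hdisj⟩ := List.nodup_append.mp hT
  have hAnn : ¬ (C.takeUntil w hw).Nil := Walk.not_nil_of_ne (Ne.symm hne)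
  have hBnn : ¬ (C.dropUntil w hw).Nil := Walk.not_nil_of_ne hne
  have hwA : w ∈ (C.takeUntil w hw).support.tail := end_mem_tail_support hAnn
  have huB : u ∈ (C.dropUntil w hw).support.tail := end_mem_tail_support hBnn
  constructor
  · rw [Walk.isPath_def, Walk.support_eq_cons, List.nodup_cons]
    exact ⟨fun hu => hdisj u hu u huB rfl, h1⟩
  · rw [Walk.isPath_def, Walk.support_eq_cons, List.nodup_cons]
    exact ⟨fun hw' => hdisj w hwA w hw' rfl, h2⟩

lemma edges_of_length_one {x y : V} {p : G.Walk x y} (h : p.length = 1) :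
    p.edges = [s(x, y)] := by
  cases p with
  | nil => simp at h
  | @cons _ b _ h' p' =>
    rw [Walk.length_cons] at h
    have hnil : p'.Nil := Walk.nil_iff_length_eq.mpr (by omega)
    have hby : b = y := hnil.eq
    subst hby
    rw [Walk.edges_cons]
    have h0 : p'.edges.length = 0 := by
      rw [Walk.length_edges]
      omega
    rw [List.length_eq_zero_iff.mp h0]

lemma card_facts (h4 : (4 : Cardinal) ≤ Cardinal.mk V) (a b c : V) :
    ∃ x : V, x ≠ a ∧ x ≠ b ∧ x ≠ c := by
  by_contra h
  push_neg at h
  have hsub : (Set.univ : Set V) ⊆ ({a, b, c} : Set V) := by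
    intro x _
    by_cases hxa : x = a
    · exact hxa ▸ Set.mem_insert _ _
    by_cases hxb : x = b
    · exact Set.mem_insert_of_mem _ (hxb ▸ Set.mem_insert _ _)
    · exact Set.mem_insert_of_mem _ (Set.mem_insert_of_mem _ (h x hxa hxb))
  have hle : Cardinal.mk V ≤ 3 := by
    calc Cardinal.mk V = Cardinal.mk (Set.univ : Set V) := (Cardinal.mk_univ).symm
      _ ≤ Cardinal.mk (({a, b, c} : Set V)) := Cardinal.mk_le_mk_of_subset hsub
      _ ≤ 3 := by
        refine le_trans (Cardinal.mk_insert_le) ?_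
        have : Cardinal.mk (({b, c} : Set V)) ≤ 2 := by
          refine le_trans (Cardinal.mk_insert_le) ?_
          rw [Cardinal.mk_singleton]
          norm_num
        calc Cardinal.mk (({b, c} : Set V)) + 1 ≤ 2 + 1 := by
              exact add_le_add_left this 1
          _ = 3 := by norm_num
  have : (4 : Cardinal) ≤ 3 := h4.trans hle
  norm_num at this

lemma start_mem_tail_support {x : V} {c : G.Walk x x} (hc : ¬ c.Nil) :
    x ∈ c.support.tail := by
  cases c with
  | nil => simp at hc
  | cons h q => simpa using q.end_mem_support

lemma mem_support_iff_mem_tail {x : V} {c : G.Walk x x} (hc : ¬ c.Nil) {y : V} :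
    y ∈ c.support ↔ y ∈ c.support.tail := by
  constructor
  · intro h
    rcases List.mem_cons.mp (by rwa [← Walk.support_eq_cons]) with rfl | h
    · exact start_mem_tail_support hc
    · exact h
  · intro h
    rw [Walk.support_eq_cons]
    exact List.mem_cons_of_mem _ h

lemma mem_support_rotate_iff {x u : V} {c : G.Walk x x} (hc : ¬ c.Nil)
    (hu : u ∈ c.support) {y : V} :
    y ∈ (c.rotate u hu).support ↔ y ∈ c.support := by
  have hrot : ¬ (c.rotate u hu).Nil := by
    rw [Walk.nil_iff_length_eq] at hc ⊢
    have : (c.rotate u hu).length = c.length := by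
      rw [Walk.rotate, Walk.length_append, add_comm, ← Walk.length_append,
        Walk.take_spec]
    omega
  rw [mem_support_iff_mem_tail hc, mem_support_iff_mem_tail hrot]
  exact (Walk.support_rotate c u hu).mem_iff

/-- the fundamental cycle-gluing lemma -/
lemma append_isCycle {u v : V} (p : G.Walk u v) (q : G.Walk v u)
    (hp : p.IsPath) (hq : q.IsPath) (huv : u ≠ v)
    (hlen : 3 ≤ p.length + q.length)
    (hmeet : ∀ x, x ∈ p.support → x ∈ q.support → x = u ∨ x = v) :
    (p.append q).IsCycle := by
  have hpt : u ∉ p.support.tail := by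
    have := hp.support_nodup
    rw [Walk.support_eq_cons] at this
    exact (List.nodup_cons.mp this).1
  have hqt : v ∉ q.support.tail := by
    have := hq.support_nodup
    rw [Walk.support_eq_cons] at this
    exact (List.nodup_cons.mp this).1
  rw [Walk.isCycle_def]
  refine ⟨⟨?_⟩, ?_, ?_⟩
  · -- edges nodup
    rw [Walk.edges_append]
    rw [List.nodup_append]
    refine ⟨hp.isTrail.edges_nodup, hq.isTrail.edges_nodup, ?_⟩
    intro e hep e' heq hne
    subst hne
    -- e has endpoints in both supports
    have hee : e ∈ G.edgeSet := Walk.edges_subset_edgeSet p hep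
    induction e with
    | h a b =>
      have hab : a ≠ b := (G.mem_edgeSet.mp hee).ne
      have ha : a ∈ p.support := Walk.fst_mem_support_of_mem_edges _ hep
      have hb : b ∈ p.support := Walk.snd_mem_support_of_mem_edges _ hep
      have ha' : a ∈ q.support := Walk.fst_mem_support_of_mem_edges _ heq
      have hb' : b ∈ q.support := Walk.snd_mem_support_of_mem_edges _ heq
      have hA := hmeet a ha ha'
      have hB := hmeet b hb hb'
      -- so s(a,b) = s(u,v)
      have he : s(a, b) = s(u, v) := by
        rcases hA with rfl | rfl <;> rcases hB with rfl | rfl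
        · exact absurd rfl hab
        · rfl
        · rw [Sym2.eq_swap]
        · exact absurd rfl hab
      rw [he] at hep heq
      have h1 : p.length = 1 := St12.length_eq_one_of_edge_mem hp hep
      have h2 : q.length = 1 :=
        St12.length_eq_one_of_edge_mem hq (by rwa [Sym2.eq_swap])
      omega
  · -- ≠ nil
    intro hnil
    have := congrArg Walk.length hnil
    rw [Walk.length_append] at this
    simp only [Walk.length_nil] at this
    omega
  · -- support tail nodup
    have hsup : (p.append q).support.tail = p.support.tail ++ q.support.tail := by
      rw [Walk.tail_support_append]
    rw [hsup, List.nodup_append]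
    refine ⟨?_, ?_, ?_⟩
    · have := hp.support_nodup
      rw [Walk.support_eq_cons] at this
      exact (List.nodup_cons.mp this).2
    · have := hq.support_nodup
      rw [Walk.support_eq_cons] at this
      exact (List.nodup_cons.mp this).2
    · intro x hx x' hx' hxx'
      subst hxx'
      have h1 : x ∈ p.support := by
        rw [Walk.support_eq_cons]; exact List.mem_cons_of_mem _ hx
      have h2 : x ∈ q.support := by
        rw [Walk.support_eq_cons]; exact List.mem_cons_of_mem _ hx'
      rcases hmeet x h1 h2 with rfl | rfl
      · exact hpt hx
      · exact hqt hx'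

lemma end_mem_tail_support' {a b : V} {p : G.Walk a b} (hp : ¬ p.Nil) :
    b ∈ p.support.tail := by
  cases p with
  | nil => simp at hp
  | cons h q => simpa using q.end_mem_support

/-- Splice a new vertex `v` adjacent to `u ∈ C` into the cycle `C`,
keeping the edge `ab` of `C` and using the edge `vu`. -/
lemma splice (htc : ∀ x : V, (G.induce ({x}ᶜ : Set V)).Connected)
    {x₀ a b u v : V} {C : G.Walk x₀ x₀} (hC : C.IsCycle)
    (hab : G.Adj a b) (habC : s(a, b) ∈ C.edges)
    (hu : u ∈ C.support) (hvu : G.Adj v u) (hvC : v ∉ C.support) :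
    ∃ (y : V) (W : G.Walk y y), W.IsCycle ∧ s(a, b) ∈ W.edges ∧
      s(v, u) ∈ W.edges ∧ v ∈ W.support := by
  classical
  have hnn : ¬ C.Nil := hC.not_nil
  have haC : a ∈ C.support := Walk.fst_mem_support_of_mem_edges _ habC
  have hbC : b ∈ C.support := Walk.snd_mem_support_of_mem_edges _ habC
  -- choose a target t on C different from u
  obtain ⟨t, htC, htu⟩ : ∃ t, t ∈ C.support ∧ t ≠ u := by
    by_cases hau : a = u
    · exact ⟨b, hbC, fun h => hab.ne (hau ▸ h ▸ rfl)⟩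
    · exact ⟨a, haC, hau⟩
  have hvne : v ≠ u := hvu.ne
  have hvmem : v ∈ ({u}ᶜ : Set V) := by simpa using hvne
  have htmem : t ∈ ({u}ᶜ : Set V) := by simpa using htu
  obtain ⟨R, hRpath, hRset⟩ := exists_path_in_set hvmem htmem
    ((htc u).preconnected _ _)
  obtain ⟨w, hwC, R', hR'path, hmeet, hsub⟩ :=
    exists_prefix_to_set R {z | z ∈ C.support} htC
  have hR'u : ∀ z ∈ R'.support, z ≠ u := by
    intro z hz
    have := hRset z (hsub z hz)
    simpa using this
  have hwu : w ≠ u := hR'u w (Walk.end_mem_support _)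
  have hvw : v ≠ w := fun h => hvC (h ▸ hwC)
  have hR'nn : ¬ R'.Nil := Walk.not_nil_of_ne hvw
  have hR'len : 1 ≤ R'.length := Walk.not_nil_iff_lt_length.mp hR'nn
  -- rotate the cycle at u
  set C' := C.rotate u hu with hC'def
  have hC' : C'.IsCycle := hC.rotate hu
  have hC'nn : ¬ C'.Nil := hC'.not_nil
  have hmemC' : ∀ z, z ∈ C'.support ↔ z ∈ C.support := fun z =>
    mem_support_rotate_iff hnn hu
  have habC' : s(a, b) ∈ C'.edges := (Walk.rotate_edges C u hu).mem_iff.mpr habC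
  have hw' : w ∈ C'.support := (hmemC' w).mpr hwC
  obtain ⟨hApath, hBpath⟩ := cycle_arcs_isPath hC' hw' hwu
  set A := C'.takeUntil w hw' with hAdef
  set B := C'.dropUntil w hw' with hBdef
  have hAnn : ¬ A.Nil := Walk.not_nil_of_ne (Ne.symm hwu)
  have hBnn : ¬ B.Nil := Walk.not_nil_of_ne hwu
  have hAlen : 1 ≤ A.length := Walk.not_nil_iff_lt_length.mp hAnn
  have hBlen : 1 ≤ B.length := Walk.not_nil_iff_lt_length.mp hBnn
  have hAC : ∀ z ∈ A.support, z ∈ C.support := fun z hz =>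
    (hmemC' z).mp (Walk.support_takeUntil_subset _ _ hz)
  have hBC : ∀ z ∈ B.support, z ∈ C.support := fun z hz =>
    (hmemC' z).mp (Walk.support_dropUntil_subset _ _ hz)
  have hsplitE : s(a, b) ∈ A.edges ∨ s(a, b) ∈ B.edges := by
    rw [← List.mem_append, ← Walk.edges_append, Walk.take_spec]
    exact habC'
  rcases hsplitE with hE | hE
  · -- use  A : u → w  and  Q = R'.reverse.concat hvu : w → u
    set Q := R'.reverse.concat hvu with hQdef
    have hQsup : Q.support = R'.support.reverse ++ [u] := by
      rw [hQdef, Walk.support_concat, Walk.support_reverse]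
    have hQpath : Q.IsPath := by
      rw [Walk.isPath_def, hQsup, List.nodup_append]
      refine ⟨by rw [List.nodup_reverse]; exact hR'path.support_nodup,
        List.nodup_singleton _, ?_⟩
      intro z hz z' hz' hzz'
      subst hzz'
      rw [List.mem_reverse] at hz
      rw [List.mem_singleton] at hz'
      exact hR'u z hz hz'
    have hQmem : ∀ z, z ∈ Q.support ↔ z ∈ R'.support ∨ z = u := by
      intro z
      rw [hQsup, List.mem_append, List.mem_reverse, List.mem_singleton]
    have hcyc : (A.append Q).IsCycle := by
      apply append_isCycle A Q hApath hQpath (Ne.symm hwu)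
      · have : Q.length = R'.length + 1 := by
          rw [hQdef, Walk.length_concat, Walk.length_reverse]
        omega
      · intro x hxA hxQ
        rcases (hQmem x).mp hxQ with hxR | rfl
        · exact Or.inr (hmeet x hxR (hAC x hxA))
        · exact Or.inl rfl
    refine ⟨u, A.append Q, hcyc, ?_, ?_, ?_⟩
    · rw [Walk.edges_append, List.mem_append]; exact Or.inl hE
    · rw [Walk.edges_append, List.mem_append]
      refine Or.inr ?_
      rw [hQdef, Walk.edges_concat, List.concat_eq_append, List.mem_append]
      exact Or.inr (List.mem_singleton.mpr rfl)
    · rw [Walk.mem_support_append_iff]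
      refine Or.inr ((hQmem v).mpr (Or.inl (Walk.start_mem_support _)))
  · -- use  B : w → u  and  Q' = cons hvu.symm R' : u → w
    set Q' := Walk.cons hvu.symm R' with hQ'def
    have hQ'path : Q'.IsPath := hR'path.cons (fun h => hR'u u h rfl)
    have hcyc : (B.append Q').IsCycle := by
      apply append_isCycle B Q' hBpath hQ'path hwu
      · have : Q'.length = R'.length + 1 := by rw [hQ'def, Walk.length_cons]
        omega
      · intro x hxB hxQ
        rw [hQ'def, Walk.support_cons, List.mem_cons] at hxQ
        rcases hxQ with rfl | hxR
        · exact Or.inr rfl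
        · exact Or.inl (hmeet x hxR (hBC x hxB))
    refine ⟨w, B.append Q', hcyc, ?_, ?_, ?_⟩
    · rw [Walk.edges_append, List.mem_append]; exact Or.inl hE
    · rw [Walk.edges_append, List.mem_append]
      refine Or.inr ?_
      rw [hQ'def, Walk.edges_cons, List.mem_cons]
      exact Or.inl (Sym2.eq_swap)
    · rw [Walk.mem_support_append_iff]
      refine Or.inr ?_
      rw [hQ'def, Walk.support_cons, List.mem_cons]
      exact Or.inr (Walk.start_mem_support _)

/-- In a suitably connected graph, every edge lies on a cycle through any
given vertex. -/
lemma vertexCycle (htc : ∀ x : V, (G.induce ({x}ᶜ : Set V)).Connected)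
    (hconn : G.Connected)
    (hnb : ∀ a b : V, G.Adj a b → ∃ c, G.Adj b c ∧ c ≠ a) :
    ∀ (n : ℕ) (a b v : V), G.Adj a b → G.dist b v ≤ n →
      ∃ (y : V) (W : G.Walk y y), W.IsCycle ∧ s(a, b) ∈ W.edges ∧ v ∈ W.support := by
  intro n
  induction n with
  | zero =>
    intro a b v hab hd
    have hvb : v = b := by
      have h0 : G.dist b v = 0 := Nat.le_zero.mp hd
      exact ((hconn.dist_eq_zero_iff).mp h0).symm
    subst hvb
    obtain ⟨c, hbc, hca⟩ := hnb a v hab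
    have hcmem : c ∈ ({v}ᶜ : Set V) := by simpa using hbc.ne'
    have hamem : a ∈ ({v}ᶜ : Set V) := by simpa using hab.ne
    obtain ⟨q, hq, hqset⟩ := exists_path_in_set hcmem hamem ((htc v).preconnected _ _)
    set p : G.Walk a c := Walk.cons hab (Walk.cons hbc Walk.nil) with hpdef
    have hac : a ≠ c := Ne.symm hca
    have hpsup : p.support = [a, v, c] := by
      rw [hpdef, Walk.support_cons, Walk.support_cons, Walk.support_nil]
    have hpp : p.IsPath := by
      rw [Walk.isPath_def, hpsup]
      simp [hab.ne, hac, hbc.ne]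
    have hqlen : 1 ≤ q.length :=
      Walk.not_nil_iff_lt_length.mp (Walk.not_nil_of_ne (Ne.symm hac))
    have hvq : v ∉ q.support := by
      intro h
      have := hqset v h
      simp at this
    have hcyc : (p.append q).IsCycle := by
      apply append_isCycle p q hpp hq hac
      · have : p.length = 2 := by rw [hpdef]; simp
        omega
      · intro x hxp hxq
        rw [hpsup] at hxp
        simp only [List.mem_cons, List.not_mem_nil, or_false] at hxp
        rcases hxp with rfl | rfl | rfl
        · exact Or.inl rfl
        · exact absurd hxq hvq
        · exact Or.inr rfl
    refine ⟨a, p.append q, hcyc, ?_, ?_⟩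
    · rw [Walk.edges_append, List.mem_append]
      refine Or.inl ?_
      rw [hpdef, Walk.edges_cons, List.mem_cons]
      exact Or.inl rfl
    · rw [Walk.mem_support_append_iff]
      refine Or.inl ?_
      rw [hpsup]
      simp
  | succ n ih =>
    intro a b v hab hd
    by_cases hdn : G.dist b v ≤ n
    · exact ih a b v hab hdn
    have hdv : G.dist b v = n + 1 := le_antisymm hd (by omega)
    have hvb : v ≠ b := by
      intro h
      subst h
      rw [SimpleGraph.dist_self] at hdv
      omega
    obtain ⟨p, hp⟩ := (hconn.preconnected b v).exists_walk_length_eq_dist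
    cases hpr : p.reverse with
    | nil => exact absurd rfl hvb
    | @cons _ u _ h q =>
      have hlen : q.length = n := by
        have h1 : p.reverse.length = p.length := Walk.length_reverse _
        rw [hpr, Walk.length_cons, hp, hdv] at h1
        omega
      have hdu : G.dist b u ≤ n := by
        have h2 := SimpleGraph.dist_le q.reverse
        rwa [Walk.length_reverse, hlen] at h2
      obtain ⟨y, W, hW, habW, huW⟩ := ih a b u hab hdu
      by_cases hvW : v ∈ W.support
      · exact ⟨y, W, hW, habW, hvW⟩
      · obtain ⟨y', W', hW', habW', _, hvW'⟩ := splice htc hW hab habW huW h hvW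
        exact ⟨y', W', hW', habW', hvW'⟩

/-- Two adjacent edges lie on a common cycle. -/
lemma sharedCase (htc : ∀ x : V, (G.induce ({x}ᶜ : Set V)).Connected)
    {a b d : V} (hab : G.Adj a b) (hbd : G.Adj b d) (had : a ≠ d) :
    ∃ (y : V) (W : G.Walk y y), W.IsCycle ∧ s(a, b) ∈ W.edges ∧ s(b, d) ∈ W.edges := by
  have hdmem : d ∈ ({b}ᶜ : Set V) := by simpa using hbd.ne'
  have hamem : a ∈ ({b}ᶜ : Set V) := by simpa using hab.ne
  obtain ⟨q, hq, hqset⟩ := exists_path_in_set hdmem hamem ((htc b).preconnected _ _)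
  set p : G.Walk a d := Walk.cons hab (Walk.cons hbd Walk.nil) with hpdef
  have hpsup : p.support = [a, b, d] := by
    rw [hpdef, Walk.support_cons, Walk.support_cons, Walk.support_nil]
  have hpp : p.IsPath := by
    rw [Walk.isPath_def, hpsup]
    simp [hab.ne, had, hbd.ne]
  have hqlen : 1 ≤ q.length :=
    Walk.not_nil_iff_lt_length.mp (Walk.not_nil_of_ne (Ne.symm had))
  have hbq : b ∉ q.support := by
    intro h
    have := hqset b h
    simp at this
  have hcyc : (p.append q).IsCycle := by
    apply append_isCycle p q hpp hq had
    · have : p.length = 2 := by rw [hpdef]; simp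
      omega
    · intro x hxp hxq
      rw [hpsup] at hxp
      simp only [List.mem_cons, List.not_mem_nil, or_false] at hxp
      rcases hxp with rfl | rfl | rfl
      · exact Or.inl rfl
      · exact absurd hxq hbq
      · exact Or.inr rfl
  refine ⟨a, p.append q, hcyc, ?_, ?_⟩
  · rw [Walk.edges_append, List.mem_append]
    refine Or.inl ?_
    rw [hpdef]
    simp
  · rw [Walk.edges_append, List.mem_append]
    refine Or.inl ?_
    rw [hpdef]
    simp

/-- Surgery: a cycle through edge `ab` and through the vertices `c`, `d`
with `cd` an edge disjoint from `ab` yields a cycle through both edges. -/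
lemma surgery {x₀ a b c d : V} {C : G.Walk x₀ x₀} (hC : C.IsCycle)
    (hab : G.Adj a b) (habC : s(a, b) ∈ C.edges) (hcd : G.Adj c d)
    (hcC : c ∈ C.support) (hdC : d ∈ C.support)
    (hac : a ≠ c) (had : a ≠ d) (hbc : b ≠ c) (hbd : b ≠ d) :
    ∃ (y : V) (W : G.Walk y y), W.IsCycle ∧ s(a, b) ∈ W.edges ∧ s(c, d) ∈ W.edges := by
  have hnn : ¬ C.Nil := hC.not_nil
  set C' := C.rotate c hcC with hC'def
  have hC' : C'.IsCycle := hC.rotate hcC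
  have hmemC' : ∀ z, z ∈ C'.support ↔ z ∈ C.support := fun z =>
    mem_support_rotate_iff hnn hcC
  have habC' : s(a, b) ∈ C'.edges := (Walk.rotate_edges C c hcC).mem_iff.mpr habC
  have hd' : d ∈ C'.support := (hmemC' d).mpr hdC
  have hdc : d ≠ c := hcd.ne'
  obtain ⟨hApath, hBpath⟩ := cycle_arcs_isPath hC' hd' hdc
  set A := C'.takeUntil d hd' with hAdef
  set B := C'.dropUntil d hd' with hBdef
  have hAlen : 1 ≤ A.length :=
    Walk.not_nil_iff_lt_length.mp (Walk.not_nil_of_ne (Ne.symm hdc))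
  have hBlen : 1 ≤ B.length :=
    Walk.not_nil_iff_lt_length.mp (Walk.not_nil_of_ne hdc)
  have hsplitE : s(a, b) ∈ A.edges ∨ s(a, b) ∈ B.edges := by
    rw [← List.mem_append, ← Walk.edges_append, Walk.take_spec]
    exact habC'
  rcases hsplitE with hE | hE
  · -- W := A.append (single edge d → c)
    have hA2 : 2 ≤ A.length := by
      by_contra hlt
      have h1 : A.length = 1 := by omega
      rw [edges_of_length_one h1, List.mem_singleton, Sym2.eq_iff] at hE
      rcases hE with ⟨rfl, -⟩ | ⟨rfl, -⟩
      · exact hac rfl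
      · exact had rfl
    set q : G.Walk d c := Walk.cons hcd.symm Walk.nil with hqdef
    have hqsup : q.support = [d, c] := by
      rw [hqdef, Walk.support_cons, Walk.support_nil]
    have hqpath : q.IsPath := by
      rw [Walk.isPath_def, hqsup]
      simp [hdc]
    have hcyc : (A.append q).IsCycle := by
      apply append_isCycle A q hApath hqpath (Ne.symm hdc)
      · have : q.length = 1 := by rw [hqdef]; simp
        omega
      · intro x hxA hxq
        rw [hqsup] at hxq
        simp only [List.mem_cons, List.not_mem_nil, or_false] at hxq
        rcases hxq with rfl | rfl
        · exact Or.inr rfl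
        · exact Or.inl rfl
    refine ⟨c, A.append q, hcyc, ?_, ?_⟩
    · rw [Walk.edges_append, List.mem_append]
      exact Or.inl hE
    · rw [Walk.edges_append, List.mem_append]
      refine Or.inr ?_
      rw [hqdef]
      simp [Sym2.eq_swap]
  · -- W := B.append (single edge c → d)
    have hB2 : 2 ≤ B.length := by
      by_contra hlt
      have h1 : B.length = 1 := by omega
      rw [edges_of_length_one h1, List.mem_singleton, Sym2.eq_iff] at hE
      rcases hE with ⟨rfl, -⟩ | ⟨rfl, -⟩
      · exact had rfl
      · exact hac rfl
    set q : G.Walk c d := Walk.cons hcd Walk.nil with hqdef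
    have hqsup : q.support = [c, d] := by
      rw [hqdef, Walk.support_cons, Walk.support_nil]
    have hqpath : q.IsPath := by
      rw [Walk.isPath_def, hqsup]
      simp [hcd.ne]
    have hcyc : (B.append q).IsCycle := by
      apply append_isCycle B q hBpath hqpath hdc
      · have : q.length = 1 := by rw [hqdef]; simp
        omega
      · intro x hxB hxq
        rw [hqsup] at hxq
        simp only [List.mem_cons, List.not_mem_nil, or_false] at hxq
        rcases hxq with rfl | rfl
        · exact Or.inr rfl
        · exact Or.inl rfl
    refine ⟨d, B.append q, hcyc, ?_, ?_⟩
    · rw [Walk.edges_append, List.mem_append]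
      exact Or.inl hE
    · rw [Walk.edges_append, List.mem_append]
      refine Or.inr ?_
      rw [hqdef]
      simp

lemma disjointCase (htc : ∀ x : V, (G.induce ({x}ᶜ : Set V)).Connected)
    (hconn : G.Connected)
    (hnb : ∀ a b : V, G.Adj a b → ∃ c, G.Adj b c ∧ c ≠ a)
    {a b c d : V} (hab : G.Adj a b) (hcd : G.Adj c d)
    (hac : a ≠ c) (had : a ≠ d) (hbc : b ≠ c) (hbd : b ≠ d) :
    ∃ (y : V) (W : G.Walk y y), W.IsCycle ∧ s(a, b) ∈ W.edges ∧ s(c, d) ∈ W.edges := by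
  obtain ⟨y, W, hW, habW, hcW⟩ :=
    vertexCycle htc hconn hnb (G.dist b c) a b c hab le_rfl
  by_cases hcdW : s(c, d) ∈ W.edges
  · exact ⟨y, W, hW, habW, hcdW⟩
  by_cases hdW : d ∈ W.support
  · exact surgery hW hab habW hcd hcW hdW hac had hbc hbd
  · obtain ⟨y', W', hW', habW', hdcW', -⟩ :=
      splice htc hW hab habW hcW hcd.symm hdW
    exact ⟨y', W', hW', habW', by rwa [Sym2.eq_swap] at hdcW'⟩

/-- In a 3-connected graph any two edges lie on a common cycle. -/
lemma common_cycle (h3 : ThreeConnected G) {e₁ e₂ : Sym2 V}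
    (h1 : e₁ ∈ G.edgeSet) (h2 : e₂ ∈ G.edgeSet) :
    ∃ (y : V) (W : G.Walk y y), W.IsCycle ∧ e₁ ∈ W.edges ∧ e₂ ∈ W.edges := by
  obtain ⟨hcard, hpair⟩ := h3
  have htc : ∀ x : V, (G.induce ({x}ᶜ : Set V)).Connected := fun x => by
    have := hpair x x
    rwa [Set.pair_eq_singleton] at this
  have hconn : G.Connected := by
    have hne : Nonempty V := by
      rw [← Cardinal.mk_ne_zero_iff]
      intro h0
      rw [h0] at hcard
      exact absurd hcard (by norm_num)
    haveI := hne
    refine ⟨fun u v => ?_⟩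
    obtain ⟨x, hxu, hxv, -⟩ := card_facts hcard u v u
    have hu : u ∈ ({x}ᶜ : Set V) := by simpa using (Ne.symm hxu)
    have hv : v ∈ ({x}ᶜ : Set V) := by simpa using (Ne.symm hxv)
    obtain ⟨p, -, -⟩ := exists_path_in_set hu hv ((htc x).preconnected _ _)
    exact ⟨p⟩
  have hnb : ∀ a b : V, G.Adj a b → ∃ c, G.Adj b c ∧ c ≠ a := by
    intro a b hab
    obtain ⟨x, hxa, hxb, -⟩ := card_facts hcard a b b
    obtain ⟨z, hz1, hz2, hz3⟩ := card_facts hcard a x b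
    have hbmem : b ∈ (({a, x} : Set V)ᶜ) := by simp [hab.ne', Ne.symm hxb]
    have hzmem : z ∈ (({a, x} : Set V)ᶜ) := by simp [hz1, hz2]
    have hreach := (hpair a x).preconnected ⟨b, hbmem⟩ ⟨z, hzmem⟩
    obtain ⟨W0⟩ := hreach
    have hWnn : ¬ W0.Nil := by
      intro hn
      have := hn.eq
      rw [Subtype.mk_eq_mk] at this
      exact hz3 this.symm
    obtain ⟨u', hadj, q, -⟩ := Walk.not_nil_iff.mp hWnn
    refine ⟨u'.val, hadj, ?_⟩
    have := u'.property
    simp only [Set.mem_compl_iff, Set.mem_insert_iff, Set.mem_singleton_iff, not_or] at this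
    exact this.1
  induction e₁ with
  | h a b =>
    induction e₂ with
    | h c d =>
      have hab : G.Adj a b := h1
      have hcd : G.Adj c d := h2
      by_cases heq : s(a, b) = s(c, d)
      · obtain ⟨y, W, hW, hm, -⟩ :=
          vertexCycle htc hconn hnb (G.dist b b) a b b hab le_rfl
        exact ⟨y, W, hW, hm, heq ▸ hm⟩
      by_cases h_ac : a = c
      · subst h_ac
        have hbd : b ≠ d := fun h => heq (by rw [h])
        obtain ⟨y, W, hW, m1, m2⟩ := sharedCase htc hab.symm hcd hbd
        exact ⟨y, W, hW, by rwa [Sym2.eq_swap] at m1, m2⟩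
      by_cases h_ad : a = d
      · subst h_ad
        have hbc : b ≠ c := by
          intro h
          subst h
          exact heq (Sym2.eq_swap)
        obtain ⟨y, W, hW, m1, m2⟩ := sharedCase htc hab.symm hcd.symm hbc
        exact ⟨y, W, hW, by rwa [Sym2.eq_swap] at m1, by rwa [Sym2.eq_swap] at m2⟩
      by_cases h_bc : b = c
      · subst h_bc
        obtain ⟨y, W, hW, m1, m2⟩ := sharedCase htc hab hcd h_ad
        exact ⟨y, W, hW, m1, m2⟩
      by_cases h_bd : b = d
      · subst h_bd
        obtain ⟨y, W, hW, m1, m2⟩ := sharedCase htc hab hcd.symm h_ac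
        exact ⟨y, W, hW, m1, by rwa [Sym2.eq_swap] at m2⟩
      · exact disjointCase htc hconn hnb hab hcd h_ac h_ad h_bc h_bd

end St12

end Statement12Aux

/-- If `f` is a circuit injection from a 3-connected graph `G`
onto `G'`, then any two edges of `G'` lie on a common circuit of `G'`. -/
theorem statement12 {V : Type u} {V' : Type v} (G : SimpleGraph V) (G' : SimpleGraph V')
    (h3 : ThreeConnected G) (f : G.edgeSet → G'.edgeSet)
    (hf : IsCircuitInjection G G' f) :
    ∀ e₁' ∈ G'.edgeSet, ∀ e₂' ∈ G'.edgeSet,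
      ∃ C' : Set (Sym2 V'), IsCircuit G' C' ∧ e₁' ∈ C' ∧ e₂' ∈ C' := by
  classical
  intro e₁' h₁' e₂' h₂'
  obtain ⟨hinj, hsurj, hcirc, hiso⟩ := hf
  obtain ⟨E₁, hE₁⟩ := hsurj ⟨e₁', h₁'⟩
  obtain ⟨E₂, hE₂⟩ := hsurj ⟨e₂', h₂'⟩
  obtain ⟨y, W, hW, m₁, m₂⟩ := St12.common_cycle h3 E₁.property E₂.property
  refine ⟨mapEdges G G' f {e | e ∈ W.edges}, hcirc _ ⟨y, W, hW, rfl⟩, ?_, ?_⟩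
  · exact ⟨E₁, m₁, by rw [hE₁]⟩
  · exact ⟨E₂, m₂, by rw [hE₂]⟩
end

section
/- Let f be a circuit injection from a 3-connected graph G onto G', and suppose for some vertex w of G' there exist edges e₁, e₂ of G sharing a vertex v with f(e₁) and f(e₂) both incident to w. Then f(S(v)) = S(w), i.e., f maps the star of v exactly onto the star of w. -/
open SimpleGraph

universe u v

namespace WhitneyAux

variable {V : Type u} {K : SimpleGraph V}

lemma mem_support_of_mem_edge {a b : V} (p : K.Walk a b) {e : Sym2 V} (he : e ∈ p.edges)
    {x : V} (hx : x ∈ e) : x ∈ p.support := by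
  induction e with | _ y z =>
  rcases Sym2.mem_iff.mp hx with rfl | rfl
  · exact p.fst_mem_support_of_mem_edges he
  · exact p.snd_mem_support_of_mem_edges he

lemma start_edge_unique {a b : V} {p : K.Walk a b} (hp : p.IsPath) :
    ∀ g₁ ∈ p.edges, ∀ g₂ ∈ p.edges, a ∈ g₁ → a ∈ g₂ → g₁ = g₂ := by
  induction p with
  | nil => intro g₁ h; simp at h
  | @cons u c w h q ih =>
    intro g₁ hg₁ g₂ hg₂ ha₁ ha₂
    have hq : u ∉ q.support := by
      have := hp.support_nodup
      simp only [Walk.support_cons, List.nodup_cons] at this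
      exact this.1
    have key : ∀ g ∈ q.edges, u ∉ g := fun g hg hu => hq (mem_support_of_mem_edge q hg hu)
    rcases List.mem_cons.mp (by simpa using hg₁) with rfl | h1
    · rcases List.mem_cons.mp (by simpa using hg₂) with rfl | h2
      · rfl
      · exact absurd ha₂ (key _ h2)
    · exact absurd ha₁ (key _ h1)

/-- In a cycle, a vertex cannot be in three distinct edges. -/
lemma cycle_no_three_edges {c : V} {p : K.Walk c c} (hp : p.IsCycle) {x : V}
    {g₁ g₂ g₃ : Sym2 V} (h1 : g₁ ∈ p.edges) (h2 : g₂ ∈ p.edges) (h3 : g₃ ∈ p.edges)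
    (n12 : g₁ ≠ g₂) (n13 : g₁ ≠ g₃) (n23 : g₂ ≠ g₃)
    (hx1 : x ∈ g₁) (hx2 : x ∈ g₂) (hx3 : x ∈ g₃) : False := by
  classical
  have hxs : x ∈ p.support := mem_support_of_mem_edge p h1 hx1
  have hq : (p.rotate _ hxs).IsCycle := hp.rotate hxs
  have hmem : ∀ g, g ∈ p.edges → g ∈ (p.rotate _ hxs).edges := fun g hg =>
    ((p.rotate_edges _ hxs).perm.mem_iff).mpr hg
  revert hq hmem
  generalize (p.rotate _ hxs) = q
  intro hq hmem
  cases q with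
  | nil => exact hq.ne_nil rfl
  | @cons _ d _ h t =>
    have ht : t.IsPath := by
      rw [Walk.isPath_def]
      have := hq.support_nodup
      simpa using this
    -- at most one of the gᵢ equals s(x,d), so two distinct ones are in t.edges
    have key : ∀ g, g ∈ p.edges → x ∈ g → g ≠ s(x, d) → g ∈ t.edges := by
      intro g hg hxg hne
      rcases List.mem_cons.mp (by simpa using hmem g hg) with h' | h'
      · exact absurd h' hne
      · exact h'
    have two : ∃ a b : Sym2 V, a ≠ b ∧ a ∈ t.edges ∧ b ∈ t.edges ∧ x ∈ a ∧ x ∈ b := by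
      by_cases e1 : g₁ = s(x, d)
      · exact ⟨g₂, g₃, n23, key _ h2 hx2 (by rw [← e1]; exact n12.symm),
          key _ h3 hx3 (by rw [← e1]; exact n13.symm), hx2, hx3⟩
      · by_cases e2 : g₂ = s(x, d)
        · exact ⟨g₁, g₃, n13, key _ h1 hx1 e1, key _ h3 hx3 (by rw [← e2]; exact n23.symm),
            hx1, hx3⟩
        · exact ⟨g₁, g₂, n12, key _ h1 hx1 e1, key _ h2 hx2 e2, hx1, hx2⟩
    obtain ⟨a, b, hab, hat, hbt, hxa, hxb⟩ := two
    have hrev : t.reverse.IsPath := (Walk.isPath_reverse_iff t).mpr ht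
    have hat' : a ∈ t.reverse.edges := by rw [Walk.edges_reverse]; simpa using hat
    have hbt' : b ∈ t.reverse.edges := by rw [Walk.edges_reverse]; simpa using hbt
    exact hab (start_edge_unique hrev a hat' b hbt' hxa hxb)

/-- A vertex on a cycle lies in two distinct edges of the cycle. -/
lemma cycle_two_edges_at {c : V} {p : K.Walk c c} (hp : p.IsCycle) {x : V} (hx : x ∈ p.support) :
    ∃ g₁ g₂ : Sym2 V, g₁ ∈ p.edges ∧ g₂ ∈ p.edges ∧ g₁ ≠ g₂ ∧ x ∈ g₁ ∧ x ∈ g₂ := by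
  classical
  have hq : (p.rotate _ hx).IsCycle := hp.rotate hx
  have hmem : ∀ g, g ∈ (p.rotate _ hx).edges → g ∈ p.edges := fun g hg =>
    ((p.rotate_edges _ hx).perm.mem_iff).mp hg
  revert hq hmem
  generalize (p.rotate _ hx) = q
  intro hq hmem
  cases q with
  | nil => exact absurd rfl hq.ne_nil
  | @cons _ d _ h t =>
    have htnil : ¬ t.Nil := by
      intro hn
      exact h.ne' (Walk.Nil.eq hn)
    obtain ⟨g₂, hg₂t, hxg₂⟩ : ∃ g₂, g₂ ∈ t.edges ∧ x ∈ g₂ := by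
      cases htr : t.reverse with
      | nil =>
        exact absurd (by rw [← Walk.reverse_reverse t, htr]; simp : t.Nil) htnil
      | @cons _ d' _ h' t' =>
        refine ⟨s(x, d'), ?_, by simp⟩
        have : s(x, d') ∈ t.reverse.edges := by rw [htr]; simp
        rw [Walk.edges_reverse] at this
        simpa using this
    have hnd : s(x, d) ∉ t.edges := by
      have := hq.edges_nodup
      simp only [Walk.edges_cons, List.nodup_cons] at this
      exact this.1
    exact ⟨s(x, d), g₂, hmem _ (by simp), hmem _ (by simp [hg₂t]),
      fun hh => hnd (hh ▸ hg₂t), by simp, hxg₂⟩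

/-- First hit of a walk on a set. -/
lemma exists_first_hit {S : Set V} : ∀ {a c : V} (W : K.Walk a c), a ∉ S → c ∈ S →
    ∃ p, p ∈ S ∧ ∃ P : K.Walk a p, P.IsPath ∧ (∀ q ∈ P.support, q ≠ p → q ∉ S) ∧
      ∀ q ∈ P.support, q ∈ W.support := by
  classical
  intro a c W
  induction W with
  | nil => intro ha hc; exact absurd hc ha
  | @cons a b c h W ih =>
    intro ha hc
    by_cases hb : b ∈ S
    · refine ⟨b, hb, Walk.cons h Walk.nil, ?_, ?_, ?_⟩
      · simp [Walk.isPath_def, h.ne]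
      · intro q hq hqb
        simp only [Walk.support_cons, Walk.support_nil, List.mem_cons] at hq
        rcases hq with rfl | hq
        · exact ha
        · simp at hq; exact absurd hq hqb
      · intro q hq
        simp only [Walk.support_cons, Walk.support_nil, List.mem_cons] at hq ⊢
        rcases hq with rfl | hq
        · exact Or.inl rfl
        · simp at hq; subst hq; exact Or.inr W.start_mem_support
    · obtain ⟨p, hpS, P, hP, hint, hsub⟩ := ih hb hc
      by_cases haP : a ∈ P.support
      · refine ⟨p, hpS, P.dropUntil a haP, hP.dropUntil haP, ?_, ?_⟩
        · exact fun q hq => hint q (Walk.support_dropUntil_subset _ _ hq)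
        · intro q hq
          simp only [Walk.support_cons, List.mem_cons]
          exact Or.inr (hsub q (Walk.support_dropUntil_subset _ _ hq))
      · refine ⟨p, hpS, Walk.cons h P, hP.cons haP, ?_, ?_⟩
        · intro q hq hqp
          simp only [Walk.support_cons, List.mem_cons] at hq
          rcases hq with rfl | hq
          · exact ha
          · exact hint q hq hqp
        · intro q hq
          simp only [Walk.support_cons, List.mem_cons] at hq ⊢
          rcases hq with rfl | hq
          · exact Or.inl rfl
          · exact Or.inr (hsub q hq)

/-- Base case: in a robust graph every edge lies on a cycle. -/
lemma cycle_through_edge (hbig : ∀ p q : V, ∃ r, r ≠ p ∧ r ≠ q)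
    (h2 : ∀ v a b : V, a ≠ v → b ≠ v → ∃ W : K.Walk a b, v ∉ W.support)
    {u z : V} (hadj : K.Adj u z) :
    ∃ (c : V) (w : K.Walk c c), w.IsCycle ∧ s(u,z) ∈ w.edges ∧ u ∈ w.support := by
  classical
  obtain ⟨r, hru, hrz⟩ := hbig u z
  obtain ⟨W₀, hW₀⟩ := h2 u z r hadj.ne' hru
  cases W₀ with
  | nil => exact absurd rfl hrz
  | @cons _ c₀ _ h₀ W₁ =>
    simp only [Walk.support_cons, List.mem_cons, not_or] at hW₀
    have hc₀u : c₀ ≠ u := fun hh => hW₀.2 (hh ▸ W₁.start_mem_support)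
    obtain ⟨W₂, hW₂⟩ := h2 z c₀ u h₀.ne' hadj.ne
    set P : K.Walk c₀ u := (W₂.toPath : K.Walk c₀ u) with hPdef
    have hPpath : P.IsPath := W₂.toPath.2
    have hzP : z ∉ P.support := fun hh => hW₂ (Walk.support_toPath_subset W₂ hh)
    refine ⟨z, Walk.cons h₀ (P.append (Walk.cons hadj Walk.nil)), ?_, ?_, ?_⟩
    · have h1 : s(z,c₀) ∉ P.edges := fun hh => hzP (mem_support_of_mem_edge P hh (by simp))
      have h3 : s(u,z) ∉ P.edges := fun hh => hzP (mem_support_of_mem_edge P hh (by simp))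
      have h2 : s(z,c₀) ≠ s(u,z) := by
        rw [Ne, Sym2.eq_iff]
        push_neg
        exact ⟨fun hh => absurd hh.symm hadj.ne, fun _ => hc₀u⟩
      refine ⟨⟨⟨?_⟩, by simp⟩, ?_⟩
      · simp only [Walk.edges_cons, Walk.edges_append, Walk.edges_nil, List.append_nil]
        rw [List.nodup_cons]
        refine ⟨?_, List.Nodup.append hPpath.edges_nodup (List.nodup_singleton _) ?_⟩
        · intro hh
          rcases List.mem_append.mp hh with hh | hh
          · exact h1 hh
          · exact h2 (by simpa using hh)
        · intro e he he'
          simp only [List.mem_singleton] at he'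
          exact h3 (he' ▸ he)
      · simp only [Walk.support_cons, List.tail_cons, Walk.support_append,
          Walk.support_cons, Walk.support_nil, List.tail_cons]
        refine List.Nodup.append hPpath.support_nodup (List.nodup_singleton _) ?_
        intro q hq hq'
        simp only [List.mem_singleton] at hq'
        exact hzP (hq' ▸ hq)
    · simp [Walk.edges_append, Sym2.eq_swap]
    · simp only [Walk.support_cons, Walk.support_append, List.mem_cons, List.mem_append]
      exact Or.inr (Or.inl P.end_mem_support)

lemma mem_support_iff_mem_tail {c : V} (w : K.Walk c c) (hw : ¬ w.Nil) {q : V} :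
    q ∈ w.support ↔ q ∈ w.support.tail := by
  cases w with
  | nil => simp at hw
  | cons h t =>
    simp only [Walk.support_cons, List.tail_cons, List.mem_cons]
    exact ⟨fun hh => hh.elim (fun hh => hh ▸ t.end_mem_support) id, Or.inr⟩

lemma mem_support_rotate_iff [DecidableEq V] {c a' : V} {C : K.Walk c c} (hC : C.IsCycle)
    (h : a' ∈ C.support) {q : V} : q ∈ (C.rotate _ h).support ↔ q ∈ C.support := by
  rw [mem_support_iff_mem_tail _ (hC.rotate h).not_nil, mem_support_iff_mem_tail _ hC.not_nil]
  exact (Walk.support_rotate C _ h).perm.mem_iff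

lemma core_aux (hbig : ∀ p q : V, ∃ r, r ≠ p ∧ r ≠ q)
    (h2 : ∀ v a b : V, a ≠ v → b ≠ v → ∃ W : K.Walk a b, v ∉ W.support) :
    ∀ (n : ℕ) {a u z : V} (hadj : K.Adj u z) (P : K.Walk a u), P.IsPath → P.length = n →
    ∃ (c : V) (w : K.Walk c c), w.IsCycle ∧ s(u,z) ∈ w.edges ∧ a ∈ w.support := by
  classical
  intro n
  induction n with
  | zero =>
    intro a u z hadj P hP hlen
    have : a = u := Walk.eq_of_length_eq_zero hlen
    subst this
    exact cycle_through_edge hbig h2 hadj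
  | succ n ih =>
    intro a u z hadj P hP hlen
    cases P with
    | nil => simp at hlen
    | @cons _ a' _ h P' =>
      have hP' : P'.IsPath := hP.of_cons
      have hlen' : P'.length = n := by simpa using hlen
      obtain ⟨c, C, hC, heC, haC⟩ := ih hadj P' hP' hlen'
      by_cases haCs : a ∈ C.support
      · exact ⟨c, C, hC, heC, haCs⟩
      set C' := C.rotate _ haC with hC'def
      have hC' : C'.IsCycle := hC.rotate haC
      have heC' : s(u,z) ∈ C'.edges := ((C.rotate_edges _ haC).perm.mem_iff).mpr heC
      have hmemC' : ∀ q : V, q ∈ C'.support ↔ q ∈ C.support :=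
        fun q => mem_support_rotate_iff hC haC
      have huC' : u ∈ C'.support := mem_support_of_mem_edge _ heC' (by simp)
      have hzC' : z ∈ C'.support := mem_support_of_mem_edge _ heC' (by simp)
      obtain ⟨t, htC', hta'⟩ : ∃ t, t ∈ C'.support ∧ t ≠ a' := by
        by_cases hu : u = a'
        · exact ⟨z, hzC', fun hh => hadj.ne (by rw [hu, ← hh])⟩
        · exact ⟨u, huC', hu⟩
      obtain ⟨W, hW⟩ := h2 a' a t h.ne hta'
      obtain ⟨p, hpC', Pa, hPa, hint, hsubW⟩ :=
        exists_first_hit (S := {q | q ∈ C'.support}) W (by simpa [hmemC'] using haCs) htC'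
      have hpC'sup : p ∈ C'.support := hpC'
      have ha'Pa : a' ∉ Pa.support := fun hh => hW (hsubW a' hh)
      have hpa' : p ≠ a' := fun hh => ha'Pa (hh ▸ Pa.end_mem_support)
      have haC's : a ∉ C'.support := by simpa [hmemC'] using haCs
      -- split C' at p into two arcs
      have hspec := C'.take_spec hpC'sup
      set T1 := C'.takeUntil p hpC'sup with hT1def
      set T2 := C'.dropUntil p hpC'sup with hT2def
      have tn : C'.support.tail.Nodup := hC'.support_nodup
      have hsupp_split : C'.support = T1.support ++ T2.support.tail := by
        rw [← hspec, Walk.support_append]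
      have htail_split : C'.support.tail = T1.support.tail ++ T2.support.tail := by
        rw [hsupp_split, T1.support_eq_cons]; rfl
      have hedge_split : C'.edges = T1.edges ++ T2.edges := by
        rw [← hspec, Walk.edges_append]
      have hpT1 : p ∈ T1.support.tail := Walk.end_mem_tail_support_of_ne hpa'.symm T1
      have ha'T2 : a' ∈ T2.support.tail := Walk.end_mem_tail_support_of_ne hpa' T2
      rw [htail_split, List.nodup_append] at tn
      obtain ⟨tn1, tn2, tdisj⟩ := tn
      have hT1nodup : T1.support.Nodup := by
        rw [T1.support_eq_cons, List.nodup_cons]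
        exact ⟨fun hh => tdisj _ hh _ ha'T2 rfl, tn1⟩
      have hT2nodup : T2.support.Nodup := by
        rw [T2.support_eq_cons, List.nodup_cons]
        exact ⟨fun hh => tdisj _ hpT1 _ hh rfl, tn2⟩
      obtain ⟨Arc, hArcPath, hArcEdge, hArcSupp, hArcEdges⟩ :
          ∃ Arc : K.Walk p a', Arc.IsPath ∧ s(u,z) ∈ Arc.edges ∧
            (∀ q ∈ Arc.support, q ∈ C'.support) ∧ (∀ e ∈ Arc.edges, e ∈ C'.edges) := by
        have heC'' := heC'
        rw [hedge_split] at heC''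
        rcases List.mem_append.mp heC'' with hh | hh
        · refine ⟨T1.reverse, (Walk.isPath_reverse_iff T1).mpr ((Walk.isPath_def _).mpr hT1nodup),
            ?_, ?_, ?_⟩
          · rw [Walk.edges_reverse]; simpa using hh
          · intro q hq
            rw [Walk.support_reverse, List.mem_reverse] at hq
            exact Walk.support_takeUntil_subset C' hpC'sup hq
          · intro e he
            rw [Walk.edges_reverse, List.mem_reverse] at he
            exact Walk.edges_takeUntil_subset C' hpC'sup he
        · exact ⟨T2, (Walk.isPath_def _).mpr hT2nodup, hh,
            fun q hq => Walk.support_dropUntil_subset C' hpC'sup hq,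
            fun e he => Walk.edges_dropUntil_subset C' hpC'sup he⟩
      have hintC : ∀ q ∈ Pa.support, q ≠ p → q ∉ C'.support := hint
      -- facts about the new cycle
      have f1 : s(a', a) ∉ Pa.edges := fun hh => ha'Pa (mem_support_of_mem_edge _ hh (by simp))
      have f2 : s(a', a) ∉ Arc.edges := fun hh =>
        haC's (hArcSupp a (mem_support_of_mem_edge _ hh (by simp)))
      have f3 : ∀ e ∈ Pa.edges, e ∉ Arc.edges := by
        intro e he₁ he₂
        induction e with | _ q₁ q₂ =>
        have hq₁ : q₁ = p := by
          by_contra hne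
          exact hintC q₁ (Pa.fst_mem_support_of_mem_edges he₁) hne
            (hArcSupp q₁ (Arc.fst_mem_support_of_mem_edges he₂))
        have hq₂ : q₂ = p := by
          by_contra hne
          exact hintC q₂ (Pa.snd_mem_support_of_mem_edges he₁) hne
            (hArcSupp q₂ (Arc.snd_mem_support_of_mem_edges he₂))
        exact (Pa.adj_of_mem_edges he₁).ne (hq₁.trans hq₂.symm)
      have hpArc : p ∉ Arc.support.tail := by
        have := hArcPath.support_nodup
        rw [Arc.support_eq_cons, List.nodup_cons] at this
        exact this.1
      refine ⟨a', Walk.cons h.symm (Pa.append Arc), ⟨⟨⟨?_⟩, by simp⟩, ?_⟩, ?_, ?_⟩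
      · -- edges nodup
        simp only [Walk.edges_cons, Walk.edges_append, List.nodup_cons, List.mem_append]
        refine ⟨fun hh => hh.elim f1 f2,
          List.Nodup.append hPa.edges_nodup hArcPath.edges_nodup f3⟩
      · -- support tail nodup
        simp only [Walk.support_cons, List.tail_cons, Walk.support_append]
        refine List.Nodup.append hPa.support_nodup
          (by
            have := hArcPath.support_nodup
            rw [Arc.support_eq_cons, List.nodup_cons] at this
            exact this.2) ?_
        intro q hq hq'
        have hqC : q ∈ C'.support := hArcSupp q (List.mem_of_mem_tail hq')
        have : q = p := by
          by_contra hne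
          exact hintC q hq hne hqC
        exact hpArc (this ▸ hq')
      · simp only [Walk.edges_cons, Walk.edges_append, List.mem_cons, List.mem_append]
        exact Or.inr (Or.inr hArcEdge)
      · simp only [Walk.support_cons, Walk.support_append, List.mem_cons, List.mem_append]
        exact Or.inr (Or.inl Pa.start_mem_support)

/-- Core lemma: in a robust graph, every vertex and every edge lie on a common cycle. -/
lemma core (hbig : ∀ p q : V, ∃ r, r ≠ p ∧ r ≠ q)
    (h2 : ∀ v a b : V, a ≠ v → b ≠ v → ∃ W : K.Walk a b, v ∉ W.support)
    (a : V) {u z : V} (hadj : K.Adj u z) :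
    ∃ (c : V) (w : K.Walk c c), w.IsCycle ∧ s(u,z) ∈ w.edges ∧ a ∈ w.support := by
  classical
  obtain ⟨r, hra, hru⟩ := hbig a u
  obtain ⟨W, -⟩ := h2 r a u hra.symm hru.symm
  exact core_aux hbig h2 W.toPath.1.length hadj W.toPath.1 W.toPath.2 rfl

section Assembly

variable {V' : Type v}

lemma exists_third (h4 : (4 : Cardinal) ≤ Cardinal.mk V) : ∀ p q : V, ∃ r, r ≠ p ∧ r ≠ q := by
  intro p q
  by_contra hcon
  push_neg at hcon
  have hsub : (Set.univ : Set V) ⊆ ({p, q} : Set V) := by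
    intro r _
    by_cases hr : r = p
    · exact Or.inl hr
    · exact Or.inr (hcon r hr)
  have h1 : Cardinal.mk V ≤ Cardinal.mk (({p, q} : Set V)) := by
    rw [← Cardinal.mk_univ]
    exact Cardinal.mk_le_mk_of_subset hsub
  have h2 : Cardinal.mk (({p, q} : Set V)) ≤ 2 := by
    refine le_trans (Cardinal.mk_insert_le) ?_
    rw [Cardinal.mk_singleton]
    norm_num
  have : (4 : Cardinal) ≤ 2 := h4.trans (h1.trans h2)
  norm_num at this

lemma avoid_two {G : SimpleGraph V} (h3 : ThreeConnected G) (x y a b : V)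
    (hax : a ≠ x) (hay : a ≠ y) (hbx : b ≠ x) (hby : b ≠ y) :
    ∃ W : G.Walk a b, x ∉ W.support ∧ y ∉ W.support := by
  have ha : a ∈ ({x, y} : Set V)ᶜ := by simp [hax, hay]
  have hb : b ∈ ({x, y} : Set V)ᶜ := by simp [hbx, hby]
  obtain ⟨W0⟩ := (h3.2 x y).preconnected ⟨a, ha⟩ ⟨b, hb⟩
  refine ⟨W0.map (SimpleGraph.Embedding.induce _).toHom, ?_, ?_⟩ <;>
  · intro hh
    change _ ∈ (W0.map (SimpleGraph.Embedding.induce ({x, y} : Set V)ᶜ).toHom).support at hh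
    rw [Walk.support_map, List.mem_map] at hh
    obtain ⟨s, -, hs⟩ := hh
    refine s.2 ?_
    show (s : V) ∈ ({x, y} : Set V)
    rw [show ((s : V)) = _ from hs]
    simp

/-- The graph `G` with all edges at `x` removed except `s(x,p)` and `s(x,q)`. -/
def trim (G : SimpleGraph V) (x p q : V) : SimpleGraph V :=
  G.deleteEdges {e | x ∈ e ∧ e ≠ s(x, p) ∧ e ≠ s(x, q)}

lemma trim_le {G : SimpleGraph V} {x p q : V} : trim G x p q ≤ G := G.deleteEdges_le _

lemma trim_edge_mem {G : SimpleGraph V} {x p q : V} {e : Sym2 V} (he : e ∈ G.edgeSet)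
    (h : x ∉ e ∨ e = s(x, p) ∨ e = s(x, q)) : e ∈ (trim G x p q).edgeSet := by
  rw [trim, edgeSet_deleteEdges]
  refine ⟨he, ?_⟩
  intro ⟨h1, h2, h3⟩
  rcases h with h | h | h
  · exact h h1
  · exact h2 h
  · exact h3 h

lemma trim_edge_cases {G : SimpleGraph V} {x p q : V} {e : Sym2 V}
    (he : e ∈ (trim G x p q).edgeSet) (hx : x ∈ e) : e = s(x, p) ∨ e = s(x, q) := by
  rw [trim, edgeSet_deleteEdges] at he
  by_contra hcon
  push_neg at hcon
  exact he.2 ⟨hx, hcon.1, hcon.2⟩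

lemma trim_h2 {G : SimpleGraph V} (h3 : ThreeConnected G) {x p q : V}
    (hpq : p ≠ q) (hp : G.Adj x p) (hq : G.Adj x q) :
    ∀ v a b : V, a ≠ v → b ≠ v → ∃ W : (trim G x p q).Walk a b, v ∉ W.support := by
  set K := trim G x p q with hK
  have key : ∀ {a b : V} (W : G.Walk a b), x ∉ W.support →
      ∃ W' : K.Walk a b, W'.support = W.support := by
    intro a b W hx
    refine ⟨W.transfer K ?_, Walk.support_transfer _ _⟩
    intro e he
    exact trim_edge_mem (W.edges_subset_edgeSet he)
      (Or.inl fun hh => hx (mem_support_of_mem_edge W he hh))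
  have adjK : ∀ y : V, y = p ∨ y = q → K.Adj x y := by
    rintro y (rfl | rfl)
    · exact (SimpleGraph.mem_edgeSet _).mp (trim_edge_mem ((SimpleGraph.mem_edgeSet G).mpr hp) (Or.inr (Or.inl rfl)))
    · exact (SimpleGraph.mem_edgeSet _).mp (trim_edge_mem ((SimpleGraph.mem_edgeSet G).mpr hq) (Or.inr (Or.inr rfl)))
  -- walks starting at x
  have fromx : ∀ v b : V, b ≠ v → b ≠ x → x ≠ v → ∃ W : K.Walk x b, v ∉ W.support := by
    intro v b hbv hbx hxv
    obtain ⟨y, hy, hyv⟩ : ∃ y : V, (y = p ∨ y = q) ∧ y ≠ v := by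
      by_cases hpv : p = v
      · exact ⟨q, Or.inr rfl, fun hh => hpq (by rw [hpv, hh])⟩
      · exact ⟨p, Or.inl rfl, hpv⟩
    have hyadj : K.Adj x y := adjK y hy
    by_cases hyb : y = b
    · subst hyb
      refine ⟨Walk.cons hyadj Walk.nil, ?_⟩
      simp only [Walk.support_cons, Walk.support_nil, List.mem_cons, List.mem_singleton]
      rintro (rfl | h)
      · exact hxv rfl
      · simp at h; exact hbv h.symm
    · obtain ⟨W0, hW1, hW2⟩ := avoid_two h3 v x y b hyv hyadj.ne' hbv hbx
      obtain ⟨W', hW'⟩ := key W0 hW2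
      refine ⟨Walk.cons hyadj W', ?_⟩
      simp only [Walk.support_cons, List.mem_cons]
      rintro (rfl | h)
      · exact hxv rfl
      · rw [hW'] at h; exact hW1 h
  intro v a b hav hbv
  by_cases hax : a = x
  · subst hax
    by_cases hbx : b = a
    · subst hbx
      exact ⟨Walk.nil, by simpa using hav.symm⟩
    · exact fromx v b hbv hbx hav
  · by_cases hbx : b = x
    · subst hbx
      obtain ⟨W, hW⟩ := fromx v a hav hax hbv
      refine ⟨W.reverse, ?_⟩
      rw [Walk.support_reverse, List.mem_reverse]
      exact hW
    · obtain ⟨W0, hW1, hW2⟩ := avoid_two h3 v x a b hav hax hbv hbx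
      obtain ⟨W', hW'⟩ := key W0 hW2
      exact ⟨W', by rw [hW']; exact hW1⟩

lemma cycle_two_at_x {G : SimpleGraph V} (h3 : ThreeConnected G) {x : V} {d d' : Sym2 V}
    (hd : d ∈ G.edgeSet) (hd' : d' ∈ G.edgeSet) (hxd : x ∈ d) (hxd' : x ∈ d')
    (hne : d ≠ d') :
    ∃ (c : V) (w : G.Walk c c), w.IsCycle ∧ d ∈ w.edges ∧ d' ∈ w.edges := by
  classical
  have hdp : d = s(x, Sym2.Mem.other hxd) := (Sym2.other_spec hxd).symm
  have hdq : d' = s(x, Sym2.Mem.other hxd') := (Sym2.other_spec hxd').symm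
  set p := Sym2.Mem.other hxd
  set q := Sym2.Mem.other hxd'
  have hpq : p ≠ q := fun hh => hne (by rw [hdp, hdq, hh])
  have hadjp : G.Adj x p := (SimpleGraph.mem_edgeSet G).mp (hdp ▸ hd)
  have hadjq : G.Adj x q := (SimpleGraph.mem_edgeSet G).mp (hdq ▸ hd')
  have hbig := exists_third h3.1
  have h2 := trim_h2 h3 hpq hadjp hadjq
  have hadjK : (trim G x p q).Adj x p :=
    (SimpleGraph.mem_edgeSet _).mp (trim_edge_mem (hdp ▸ hd) (Or.inr (Or.inl rfl)))
  obtain ⟨c, w, hcyc, hedge, hxsup⟩ := core hbig h2 x hadjK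
  obtain ⟨g₁, g₂, hg₁, hg₂, hgne, hxg₁, hxg₂⟩ := cycle_two_edges_at hcyc hxsup
  have hcases : ∀ g, g ∈ w.edges → x ∈ g → g = d ∨ g = d' := by
    intro g hg hxg
    rcases trim_edge_cases (w.edges_subset_edgeSet hg) hxg with hh | hh
    · exact Or.inl (by rw [hdp, hh])
    · exact Or.inr (by rw [hdq, hh])
  have hboth : d ∈ w.edges ∧ d' ∈ w.edges := by
    rcases hcases g₁ hg₁ hxg₁ with h1 | h1 <;> rcases hcases g₂ hg₂ hxg₂ with h2 | h2
    · exact absurd (h1.trans h2.symm) hgne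
    · exact ⟨h1 ▸ hg₁, h2 ▸ hg₂⟩
    · exact ⟨h2 ▸ hg₂, h1 ▸ hg₁⟩
    · exact absurd (h1.trans h2.symm) hgne
  have hsub : ∀ e ∈ w.edges, e ∈ G.edgeSet := fun e he =>
    (SimpleGraph.edgeSet_mono trim_le) (w.edges_subset_edgeSet he)
  exact ⟨c, w.transfer G hsub, hcyc.transfer hsub,
    by rw [Walk.edges_transfer]; exact hboth.1,
    by rw [Walk.edges_transfer]; exact hboth.2⟩

lemma cycle_three {G : SimpleGraph V} (h3 : ThreeConnected G) {x : V} {d d' e : Sym2 V}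
    (hd : d ∈ G.edgeSet) (hd' : d' ∈ G.edgeSet) (hxd : x ∈ d) (hxd' : x ∈ d')
    (hne : d ≠ d') (heE : e ∈ G.edgeSet) (hxe : x ∉ e) :
    ∃ (c : V) (w : G.Walk c c), w.IsCycle ∧ d ∈ w.edges ∧ d' ∈ w.edges ∧ e ∈ w.edges := by
  classical
  have hdp : d = s(x, Sym2.Mem.other hxd) := (Sym2.other_spec hxd).symm
  have hdq : d' = s(x, Sym2.Mem.other hxd') := (Sym2.other_spec hxd').symm
  set p := Sym2.Mem.other hxd
  set q := Sym2.Mem.other hxd'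
  have hpq : p ≠ q := fun hh => hne (by rw [hdp, hdq, hh])
  have hadjp : G.Adj x p := (SimpleGraph.mem_edgeSet G).mp (hdp ▸ hd)
  have hadjq : G.Adj x q := (SimpleGraph.mem_edgeSet G).mp (hdq ▸ hd')
  have hbig := exists_third h3.1
  have h2 := trim_h2 h3 hpq hadjp hadjq
  have heK : e ∈ (trim G x p q).edgeSet := trim_edge_mem heE (Or.inl hxe)
  revert heK
  induction e using Sym2.ind with | _ u z =>
  intro heK
  have hadjK : (trim G x p q).Adj u z := (SimpleGraph.mem_edgeSet _).mp heK
  obtain ⟨c, w, hcyc, hedge, hxsup⟩ := core hbig h2 x hadjK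
  obtain ⟨g₁, g₂, hg₁, hg₂, hgne, hxg₁, hxg₂⟩ := cycle_two_edges_at hcyc hxsup
  have hcases : ∀ g, g ∈ w.edges → x ∈ g → g = d ∨ g = d' := by
    intro g hg hxg
    rcases trim_edge_cases (w.edges_subset_edgeSet hg) hxg with hh | hh
    · exact Or.inl (by rw [hdp, hh])
    · exact Or.inr (by rw [hdq, hh])
  have hboth : d ∈ w.edges ∧ d' ∈ w.edges := by
    rcases hcases g₁ hg₁ hxg₁ with h1 | h1 <;> rcases hcases g₂ hg₂ hxg₂ with h2 | h2
    · exact absurd (h1.trans h2.symm) hgne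
    · exact ⟨h1 ▸ hg₁, h2 ▸ hg₂⟩
    · exact ⟨h2 ▸ hg₂, h1 ▸ hg₁⟩
    · exact absurd (h1.trans h2.symm) hgne
  have hsub : ∀ e' ∈ w.edges, e' ∈ G.edgeSet := fun e' he' =>
    (SimpleGraph.edgeSet_mono trim_le) (w.edges_subset_edgeSet he')
  exact ⟨c, w.transfer G hsub, hcyc.transfer hsub,
    by rw [Walk.edges_transfer]; exact hboth.1,
    by rw [Walk.edges_transfer]; exact hboth.2,
    by rw [Walk.edges_transfer]; exact hedge⟩

lemma no_three (G : SimpleGraph V) (G' : SimpleGraph V') (f : G.edgeSet → G'.edgeSet)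
    (hf : IsCircuitInjection G G' f) {w : V'} {c : V} {wk : G.Walk c c} (hcyc : wk.IsCycle)
    (d₁ d₂ d₃ : G.edgeSet) (h1 : (d₁ : Sym2 V) ∈ wk.edges) (h2 : (d₂ : Sym2 V) ∈ wk.edges)
    (h3 : (d₃ : Sym2 V) ∈ wk.edges)
    (n12 : d₁ ≠ d₂) (n13 : d₁ ≠ d₃) (n23 : d₂ ≠ d₃)
    (hw1 : w ∈ (f d₁ : Sym2 V')) (hw2 : w ∈ (f d₂ : Sym2 V'))
    (hw3 : w ∈ (f d₃ : Sym2 V')) : False := by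
  obtain ⟨finj, fsurj, fcirc, -⟩ := hf
  have hcircuit : IsCircuit G {e | e ∈ wk.edges} := ⟨c, wk, hcyc, rfl⟩
  obtain ⟨x', w', hw'cyc, heq⟩ := fcirc _ hcircuit
  have hm : ∀ d : G.edgeSet, (d : Sym2 V) ∈ wk.edges → (f d : Sym2 V') ∈ w'.edges := by
    intro d hd
    have hmem : (f d : Sym2 V') ∈ mapEdges G G' f {e | e ∈ wk.edges} := ⟨d, hd, rfl⟩
    rw [heq] at hmem
    exact hmem
  have fn : ∀ {d d' : G.edgeSet}, d ≠ d' → (f d : Sym2 V') ≠ (f d' : Sym2 V') :=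
    fun hdd hh => hdd (finj (Subtype.ext hh))
  exact cycle_no_three_edges hw'cyc (hm d₁ h1) (hm d₂ h2) (hm d₃ h3)
    (fn n12) (fn n13) (fn n23) hw1 hw2 hw3


end Assembly

end WhitneyAux


/-- If two edges of `G` at a vertex `v` have images incident at
a vertex `w`, then `f` maps the star of `v` exactly onto the star of `w`. -/
theorem statement14 {V : Type u} {V' : Type v} (G : SimpleGraph V) (G' : SimpleGraph V')
    (h3 : ThreeConnected G) (f : G.edgeSet → G'.edgeSet)
    (hf : IsCircuitInjection G G' f) (w : V') (x : V)
    (e₁ e₂ : G.edgeSet) (hne : e₁ ≠ e₂)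
    (hx₁ : x ∈ (e₁ : Sym2 V)) (hx₂ : x ∈ (e₂ : Sym2 V))
    (hw₁ : w ∈ (f e₁ : Sym2 V')) (hw₂ : w ∈ (f e₂ : Sym2 V')) :
    mapEdges G G' f (G.incidenceSet x) = G'.incidenceSet w := by
  classical
  have hf' := hf
  obtain ⟨finj, fsurj, fcirc, -⟩ := hf'
  have cne : ∀ {a b : G.edgeSet}, a ≠ b → (a : Sym2 V) ≠ (b : Sym2 V) :=
    fun h hh => h (Subtype.ext hh)
  have hne' : (e₁ : Sym2 V) ≠ (e₂ : Sym2 V) := cne hne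
  -- Claim A: no edge avoiding x can map to an edge at w
  have keyA : ∀ d : G.edgeSet, x ∉ (d : Sym2 V) → w ∈ (f d : Sym2 V') → False := by
    intro d hxd hwd
    obtain ⟨c, wk, hcyc, h1, h2, h3e⟩ :=
      WhitneyAux.cycle_three h3 e₁.2 e₂.2 hx₁ hx₂ hne' d.2 hxd
    have nd1 : e₁ ≠ d := fun hh => hxd (hh ▸ hx₁)
    have nd2 : e₂ ≠ d := fun hh => hxd (hh ▸ hx₂)
    exact WhitneyAux.no_three G G' f hf hcyc e₁ e₂ d h1 h2 h3e hne nd1 nd2 hw₁ hw₂ hwd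
  -- Claim B: every edge at x maps to an edge at w
  have keyB : ∀ d : G.edgeSet, x ∈ (d : Sym2 V) → w ∈ (f d : Sym2 V') := by
    intro d hxd
    by_contra hwd
    have hde₂ : d ≠ e₂ := fun hh => hwd (hh ▸ hw₂)
    obtain ⟨c, wk, hcyc, hE2, hEd⟩ :=
      WhitneyAux.cycle_two_at_x h3 e₂.2 d.2 hx₂ hxd (cne hde₂.symm)
    have hcircuit : IsCircuit G {e | e ∈ wk.edges} := ⟨c, wk, hcyc, rfl⟩
    obtain ⟨x', w', hw'cyc, heq⟩ := fcirc _ hcircuit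
    have hfe₂ : (f e₂ : Sym2 V') ∈ w'.edges := by
      have hmem : (f e₂ : Sym2 V') ∈ mapEdges G G' f {e | e ∈ wk.edges} := ⟨e₂, hE2, rfl⟩
      rw [heq] at hmem
      exact hmem
    have hwsup : w ∈ w'.support := WhitneyAux.mem_support_of_mem_edge _ hfe₂ hw₂
    obtain ⟨g₁, g₂, hg₁, hg₂, hgne, hwg₁, hwg₂⟩ :=
      WhitneyAux.cycle_two_edges_at hw'cyc hwsup
    have pull : ∀ g, g ∈ w'.edges →
        ∃ cc : G.edgeSet, (cc : Sym2 V) ∈ wk.edges ∧ (f cc : Sym2 V') = g := by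
      intro g hg
      have hmem : g ∈ mapEdges G G' f {e | e ∈ wk.edges} := by rw [heq]; exact hg
      exact hmem
    obtain ⟨c₁, hc₁, hfc₁⟩ := pull g₁ hg₁
    obtain ⟨c₂, hc₂, hfc₂⟩ := pull g₂ hg₂
    have hcc : c₁ ≠ c₂ := fun hh => hgne (by rw [← hfc₁, ← hfc₂, hh])
    have hnd : ∀ cc : G.edgeSet, ((f cc : Sym2 V') = g₁ ∨ (f cc : Sym2 V') = g₂) → cc ≠ d := by
      intro cc hg hh
      subst hh
      rcases hg with hg | hg
      · exact hwd (by rw [hg]; exact hwg₁)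
      · exact hwd (by rw [hg]; exact hwg₂)
    obtain ⟨cc, hccwk, hfcc, hccne₂, hccned⟩ :
        ∃ cc : G.edgeSet, (cc : Sym2 V) ∈ wk.edges ∧ w ∈ (f cc : Sym2 V') ∧
          cc ≠ e₂ ∧ cc ≠ d := by
      by_cases h1 : c₁ = e₂
      · refine ⟨c₂, hc₂, by rw [hfc₂]; exact hwg₂, ?_, hnd c₂ (Or.inr hfc₂)⟩
        intro hh
        exact hcc (h1.trans hh.symm)
      · exact ⟨c₁, hc₁, by rw [hfc₁]; exact hwg₁, h1, hnd c₁ (Or.inl hfc₁)⟩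
    have hxcc : x ∉ (cc : Sym2 V) := by
      intro hx
      exact WhitneyAux.cycle_no_three_edges hcyc hccwk hE2 hEd
        (cne hccne₂) (cne hccned) (cne hde₂.symm) hx hx₂ hxd
    exact keyA cc hxcc hfcc
  ext g'
  constructor
  · rintro ⟨d, hd, rfl⟩
    exact ⟨(f d).2, keyB d hd.2⟩
  · intro hg'
    obtain ⟨d, hd⟩ := fsurj ⟨g', hg'.1⟩
    by_cases hxd : x ∈ (d : Sym2 V)
    · exact ⟨d, ⟨d.2, hxd⟩, by rw [hd]⟩
    · exact (keyA d hxd (by rw [hd]; exact hg'.2)).elim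
end
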